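/- arXiv:2110.07991 — 8 statements merged into one kernel-verified Lean document; each statement's English description precedes it below -/
import Mathlib

section
/- A bounded subset B of a Banach space E is limited if and only if for every bounded linear operator T : E → c₀ the image T(B) is totally bounded in c₀. -/
open Filter Topology Bornology

noncomputable section

variable {𝕜 E F : Type*} [RCLike 𝕜] [NormedAddCommGroup E] [NormedSpace 𝕜 E]
  [NormedAddCommGroup F] [NormedSpace 𝕜 F]

/-- `c₀` over `𝕜`: scalar sequences vanishing at infinity, with the sup norm. -/
abbrev czero (𝕜 : Type*) [RCLike 𝕜] := ZeroAtInftyContinuousMap ℕ 𝕜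

/-- A sequence of functionals is weak* null if it converges to `0` pointwise. -/
def WeakStarNull (χ : ℕ → E →L[𝕜] 𝕜) : Prop :=
  ∀ x : E, Tendsto (fun n => χ n x) atTop (𝓝 0)

/-- `sup_{x ∈ B} |χ n x| → 0`. -/
def UnifNull (χ : ℕ → E →L[𝕜] 𝕜) (B : Set E) : Prop :=
  Tendsto (fun n => ⨆ x : B, ‖χ n (x : E)‖) atTop (𝓝 0)

/-- A set is limited if every weak* null sequence converges to `0` uniformly on it. -/
def Limited (𝕜 : Type*) [RCLike 𝕜] {E : Type*} [NormedAddCommGroup E]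
    [NormedSpace 𝕜 E] (B : Set E) : Prop :=
  ∀ χ : ℕ → E →L[𝕜] 𝕜, WeakStarNull χ → UnifNull χ B

/-- A Banach space is Gelfand–Phillips if every (bounded) limited set is totally bounded. -/
def GelfandPhillips (𝕜 E : Type*) [RCLike 𝕜] [NormedAddCommGroup E]
    [NormedSpace 𝕜 E] : Prop :=
  ∀ B : Set E, IsBounded B → Limited 𝕜 B → TotallyBounded B

namespace Stmt4Aux

lemma czero_norm_apply_le (f : czero 𝕜) (n : ℕ) : ‖f n‖ ≤ ‖f‖ := by
  rw [← ZeroAtInftyContinuousMap.norm_toBCF_eq_norm]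
  exact f.toBCF.norm_coe_le_norm n

lemma czero_norm_le {f : czero 𝕜} {C : ℝ} (hC : 0 ≤ C) (h : ∀ n, ‖f n‖ ≤ C) : ‖f‖ ≤ C := by
  rw [← ZeroAtInftyContinuousMap.norm_toBCF_eq_norm]
  exact (BoundedContinuousFunction.norm_le hC).2 h

lemma czero_tendsto (f : czero 𝕜) : Tendsto (fun n => f n) atTop (𝓝 0) := by
  have := f.zero_at_infty'
  rwa [cocompact_eq_atTop] at this

/-- evaluation at `n` as a continuous linear functional on `c₀`. -/
def ev (𝕜 : Type*) [RCLike 𝕜] (n : ℕ) : czero 𝕜 →L[𝕜] 𝕜 :=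
  LinearMap.mkContinuous
    { toFun := fun f => f n
      map_add' := fun f g => rfl
      map_smul' := fun c f => rfl } 1
    (fun f => by simpa using czero_norm_apply_le f n)

@[simp] lemma ev_apply (n : ℕ) (f : czero 𝕜) : ev 𝕜 n f = f n := rfl

end Stmt4Aux

open Stmt4Aux in
theorem stmt4 [CompleteSpace E] (B : Set E) (hB : IsBounded B) :
    Limited 𝕜 B ↔ ∀ T : E →L[𝕜] czero 𝕜, TotallyBounded (T '' B) := by
  obtain ⟨M, hM0, hM⟩ : ∃ M, 0 ≤ M ∧ ∀ x ∈ B, ‖x‖ ≤ M := by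
    obtain ⟨M, hM⟩ := hB.exists_norm_le
    exact ⟨max M 0, le_max_right _ _, fun x hx => (hM x hx).trans (le_max_left _ _)⟩
  constructor
  · -- limited → images totally bounded
    intro hL T
    rw [Metric.totallyBounded_iff]
    intro ε hε
    set χ : ℕ → E →L[𝕜] 𝕜 := fun n => (ev 𝕜 n).comp T with hχdef
    have hws : WeakStarNull χ := fun x => czero_tendsto (T x)
    have hun : UnifNull χ B := hL χ hws
    -- uniform bound on sup over B
    have hbdd : ∀ n : ℕ, BddAbove (Set.range fun x : B => ‖χ n (x : E)‖) := by
      intro n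
      refine ⟨‖χ n‖ * M, ?_⟩
      rintro _ ⟨x, rfl⟩
      calc ‖χ n (x : E)‖ ≤ ‖χ n‖ * ‖(x : E)‖ := (χ n).le_opNorm _
        _ ≤ ‖χ n‖ * M := by
            exact mul_le_mul_of_nonneg_left (hM _ x.2) (norm_nonneg _)
    obtain ⟨N, hN⟩ := (Metric.tendsto_atTop.mp hun) (ε / 3) (by positivity)
    have htail : ∀ x ∈ B, ∀ n, N ≤ n → ‖(T x) n‖ ≤ ε / 3 := by
      intro x hx n hn
      have h1 : ‖χ n x‖ ≤ ⨆ y : B, ‖χ n (y : E)‖ := le_ciSup (hbdd n) ⟨x, hx⟩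
      have h2 := hN n hn
      rw [Real.dist_eq, sub_zero] at h2
      have h3 : (⨆ y : B, ‖χ n (y : E)‖) ≤ |⨆ y : B, ‖χ n (y : E)‖| := le_abs_self _
      have : ‖χ n x‖ ≤ ε / 3 := le_of_lt (lt_of_le_of_lt (h1.trans h3) h2)
      simpa [hχdef] using this
    -- finite-dimensional truncation
    set Φ : E → (Fin N → 𝕜) := fun x i => (T x) (i : ℕ) with hΦdef
    have hΦball : Φ '' B ⊆ Metric.closedBall 0 (‖T‖ * M) := by
      rintro _ ⟨x, hx, rfl⟩
      rw [Metric.mem_closedBall, dist_zero_right]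
      refine (pi_norm_le_iff_of_nonneg (by positivity)).2 fun i => ?_
      calc ‖(T x) (i : ℕ)‖ ≤ ‖T x‖ := czero_norm_apply_le _ _
        _ ≤ ‖T‖ * ‖x‖ := T.le_opNorm x
        _ ≤ ‖T‖ * M := mul_le_mul_of_nonneg_left (hM x hx) (ContinuousLinearMap.opNorm_nonneg T)
    have hΦtb : TotallyBounded (Φ '' B) :=
      TotallyBounded.subset hΦball (isCompact_closedBall _ _).totallyBounded
    obtain ⟨t, htsub, htfin, htcov⟩ := totallyBounded_iff_subset.mp hΦtb
      {p | dist p.1 p.2 < ε / 3} (Metric.dist_mem_uniformity (by positivity))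
    -- choose preimages in B for the net
    have hch : ∀ y : t, ∃ x ∈ B, Φ x = (y : Fin N → 𝕜) := fun y => by
      obtain ⟨x, hx, hxy⟩ := htsub y.2
      exact ⟨x, hx, hxy⟩
    choose w hwB hwΦ using hch
    haveI : Finite t := htfin.to_subtype
    refine ⟨T '' Set.range w, ((Set.finite_range w).image T), ?_⟩
    rintro _ ⟨x, hx, rfl⟩
    have hxcov := htcov ⟨x, hx, rfl⟩
    obtain ⟨y, hyt, hyball⟩ := Set.mem_iUnion₂.mp hxcov
    refine Set.mem_iUnion₂.mpr ⟨T (w ⟨y, hyt⟩), ⟨w ⟨y, hyt⟩, ⟨⟨y, hyt⟩, rfl⟩, rfl⟩, ?_⟩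
    rw [Metric.mem_ball, dist_eq_norm]
    have hnorm : ‖T x - T (w ⟨y, hyt⟩)‖ ≤ 2 * ε / 3 := by
      refine czero_norm_le (by positivity) fun n => ?_
      have hcoe : (T x - T (w ⟨y, hyt⟩)) n = (T x) n - (T (w ⟨y, hyt⟩)) n := rfl
      rw [hcoe]
      rcases lt_or_ge n N with hn | hn
      · -- small coordinates: use the finite-dimensional net
        have hdist : ‖Φ x - (y : Fin N → 𝕜)‖ < ε / 3 := by
          rw [← dist_eq_norm]; exact hyball
        have hcoord : ‖(Φ x - (y : Fin N → 𝕜)) ⟨n, hn⟩‖ ≤ ‖Φ x - (y : Fin N → 𝕜)‖ :=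
          norm_le_pi_norm _ _
        have : ‖(T x) n - (T (w ⟨y, hyt⟩)) n‖ < ε / 3 := by
          have hy'' : Φ (w ⟨y, hyt⟩) = y := hwΦ ⟨y, hyt⟩
          have hy' : (y : Fin N → 𝕜) ⟨n, hn⟩ = (T (w ⟨y, hyt⟩)) n :=
            (congrFun hy'' ⟨n, hn⟩).symm
          have : (Φ x - (y : Fin N → 𝕜)) ⟨n, hn⟩ = (T x) n - (T (w ⟨y, hyt⟩)) n := by
            simp [hΦdef, hy']
          rw [← this]
          exact lt_of_le_of_lt hcoord hdist
        linarith
      · -- large coordinates: both tails are small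
        have h1 := htail x hx n hn
        have h2 := htail (w ⟨y, hyt⟩) (hwB ⟨y, hyt⟩) n hn
        calc ‖(T x) n - (T (w ⟨y, hyt⟩)) n‖ ≤ ‖(T x) n‖ + ‖(T (w ⟨y, hyt⟩)) n‖ :=
              norm_sub_le _ _
          _ ≤ 2 * ε / 3 := by linarith
    linarith
  · -- images totally bounded → limited
    intro hTB χ hws
    -- uniform boundedness of the functionals
    have hpt : ∀ x : E, ∃ C, ∀ n, ‖χ n x‖ ≤ C := by
      intro x
      obtain ⟨C, hC⟩ := ((hws x).norm.bddAbove_range)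
      exact ⟨C, fun n => hC ⟨n, rfl⟩⟩
    obtain ⟨C, hC⟩ := banach_steinhaus hpt
    have hC0 : 0 ≤ C := le_trans (norm_nonneg _) (hC 0)
    -- build the operator into c₀
    set Tf : E → czero 𝕜 := fun x =>
      { toFun := fun n => χ n x
        continuous_toFun := continuous_of_discreteTopology
        zero_at_infty' := by rw [cocompact_eq_atTop]; exact hws x } with hTfdef
    have hTf_apply : ∀ x n, (Tf x) n = χ n x := fun x n => rfl
    set T : E →L[𝕜] czero 𝕜 := LinearMap.mkContinuous
      { toFun := Tf
        map_add' := fun x y => by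
          ext n; simp [hTf_apply]
        map_smul' := fun c x => by
          ext n; simp [hTf_apply] }
      C (fun x => czero_norm_le (by positivity) fun n => by
          simpa [hTf_apply] using
            le_trans ((χ n).le_opNorm x) (mul_le_mul_of_nonneg_right (hC n) (norm_nonneg x)))
      with hTdef
    have hT_apply : ∀ x n, (T x) n = χ n x := fun x n => rfl
    -- use total boundedness of T '' B
    rw [UnifNull, Metric.tendsto_atTop]
    intro ε hε
    obtain ⟨t, htfin, htcov⟩ := Metric.totallyBounded_iff.mp (hTB T) (ε / 3) (by positivity)
    have hNy : ∀ y : czero 𝕜, ∃ N, ∀ n, N ≤ n → ‖y n‖ < ε / 3 := by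
      intro y
      obtain ⟨N, hN⟩ := (Metric.tendsto_atTop.mp (czero_tendsto y)) (ε / 3) (by positivity)
      exact ⟨N, fun n hn => by simpa [Real.dist_eq, dist_eq_norm] using hN n hn⟩
    choose Nf hNf using hNy
    obtain ⟨N, hN⟩ : ∃ N, ∀ y ∈ t, Nf y ≤ N := by
      obtain ⟨N, hN⟩ := (htfin.image Nf).bddAbove
      exact ⟨N, fun y hy => hN ⟨y, hy, rfl⟩⟩
    refine ⟨N, fun n hn => ?_⟩
    rw [Real.dist_eq, sub_zero]
    have hsup_nonneg : 0 ≤ ⨆ x : B, ‖χ n (x : E)‖ :=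
      Real.iSup_nonneg fun x => norm_nonneg _
    rw [abs_of_nonneg hsup_nonneg]
    have hbound : ∀ x : B, ‖χ n (x : E)‖ ≤ 2 * ε / 3 := by
      rintro ⟨x, hx⟩
      have hTx : T x ∈ ⋃ y ∈ t, Metric.ball y (ε / 3) := htcov ⟨x, hx, rfl⟩
      obtain ⟨y, hyt, hyball⟩ := Set.mem_iUnion₂.mp hTx
      have hdist : ‖T x - y‖ < ε / 3 := by
        rw [← dist_eq_norm]; exact Metric.mem_ball.mp hyball
      have hcoord : ‖(T x) n - y n‖ ≤ ‖T x - y‖ := by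
        have : (T x - y) n = (T x) n - y n := rfl
        rw [← this]; exact czero_norm_apply_le _ _
      have hyn : ‖y n‖ < ε / 3 := hNf y n (le_trans (hN y hyt) hn)
      calc ‖χ n x‖ = ‖(T x) n‖ := by rw [hT_apply]
        _ ≤ ‖(T x) n - y n‖ + ‖y n‖ := by
              simpa using norm_add_le ((T x) n - y n) (y n)
        _ ≤ ‖T x - y‖ + ‖y n‖ := by linarith
        _ ≤ 2 * ε / 3 := by linarith
    have := Real.iSup_le hbound (by positivity)
    linarith
end
end

section
/- A Banach space E is Gelfand–Phillips if and only if for every bounded non-totally-bounded subset X of E there exists a bounded linear operator T : E → c₀ such that T(X) is not totally bounded in c₀. -/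
open Filter Topology Bornology

noncomputable section

variable {𝕜 E F : Type*} [RCLike 𝕜] [NormedAddCommGroup E] [NormedSpace 𝕜 E]
  [NormedAddCommGroup F] [NormedSpace 𝕜 F]

/-! ### Auxiliary lemmas -/

lemma czero_apply_norm_le (f : czero 𝕜) (n : ℕ) : ‖f n‖ ≤ ‖f‖ := by
  rw [← ZeroAtInftyContinuousMap.norm_toBCF_eq_norm]
  exact BoundedContinuousFunction.norm_coe_le_norm f.toBCF n

lemma czero_norm_le {f : czero 𝕜} {C : ℝ} (hC : 0 ≤ C) (h : ∀ n, ‖f n‖ ≤ C) : ‖f‖ ≤ C := by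
  rw [← ZeroAtInftyContinuousMap.norm_toBCF_eq_norm]
  exact (BoundedContinuousFunction.norm_le hC).2 h

lemma czero_tendsto (f : czero 𝕜) : Tendsto (fun n => f n) atTop (𝓝 0) := by
  have := f.zero_at_infty'
  rwa [cocompact_eq_atTop (α := ℕ)] at this

/-- Evaluation at a coordinate as a continuous linear functional on `c₀`. -/
def czeroEval (𝕜 : Type*) [RCLike 𝕜] (n : ℕ) : czero 𝕜 →L[𝕜] 𝕜 :=
  LinearMap.mkContinuous
    { toFun := fun f => f n
      map_add' := fun f g => by simp
      map_smul' := fun c f => by simp }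
    1 (fun f => by simpa using czero_apply_norm_le f n)

@[simp] lemma czeroEval_apply (n : ℕ) (f : czero 𝕜) : czeroEval 𝕜 n f = f n := rfl

/-- The sup of coordinate norms over an image agrees with the sup over the original set. -/
lemma supImage (T : E →L[𝕜] czero 𝕜) (X : Set E) (n : ℕ) :
    (⨆ x : X, ‖(T x) n‖) = ⨆ y : (T '' X), ‖(y : czero 𝕜) n‖ := by
  have : Set.range (fun x : X => ‖(T x) n‖)
      = Set.range (fun y : (T '' X) => ‖(y : czero 𝕜) n‖) := by
    ext r
    constructor
    · rintro ⟨⟨x, hx⟩, rfl⟩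
      exact ⟨⟨T x, ⟨x, hx, rfl⟩⟩, rfl⟩
    · rintro ⟨⟨y, ⟨x, hx, rfl⟩⟩, rfl⟩
      exact ⟨⟨x, hx⟩, rfl⟩
  simp only [iSup]
  rw [this]

/-- Totally bounded subsets of `c₀` vanish uniformly at infinity. -/
lemma unifVanish_of_totallyBounded {S : Set (czero 𝕜)} (hS : TotallyBounded S) :
    Tendsto (fun n => ⨆ f : S, ‖(f : czero 𝕜) n‖) atTop (𝓝 0) := by
  rw [Metric.tendsto_atTop]
  intro ε hε
  obtain ⟨t, htfin, htcov⟩ := Metric.totallyBounded_iff.1 hS (ε / 4) (by linarith)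
  have hev : ∀ᶠ n in atTop, ∀ g ∈ t, ‖g n‖ < ε / 4 := by
    rw [eventually_all_finite htfin]
    intro g _
    have hg := czero_tendsto g
    have hg' : Tendsto (fun n => ‖g n‖) atTop (𝓝 0) := by simpa using hg.norm
    exact hg'.eventually_lt_const (by linarith)
  obtain ⟨N, hN⟩ := eventually_atTop.1 hev
  refine ⟨N, fun n hn => ?_⟩
  have hsup : (⨆ f : S, ‖(f : czero 𝕜) n‖) ≤ ε / 2 := by
    apply Real.iSup_le _ (by linarith)
    rintro ⟨f, hf⟩
    obtain ⟨g, hg, hfg⟩ := Set.mem_iUnion₂.1 (htcov hf)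
    have h1 : ‖f n - g n‖ ≤ dist f g := by
      have h := czero_apply_norm_le (f - g) n
      rw [dist_eq_norm]
      simpa using h
    have h2 : ‖f n‖ ≤ ‖f n - g n‖ + ‖g n‖ := by
      calc ‖f n‖ = ‖(f n - g n) + g n‖ := by ring_nf
        _ ≤ ‖f n - g n‖ + ‖g n‖ := norm_add_le _ _
    have h3 : dist f g < ε / 4 := Metric.mem_ball.1 hfg
    have h4 : ‖g n‖ < ε / 4 := hN n hn g hg
    linarith
  have hnonneg : (0:ℝ) ≤ ⨆ f : S, ‖(f : czero 𝕜) n‖ :=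
    Real.iSup_nonneg (fun f => norm_nonneg _)
  rw [Real.dist_eq, sub_zero, abs_of_nonneg hnonneg]
  linarith

/-- Bounded subsets of `c₀` vanishing uniformly at infinity are totally bounded. -/
lemma totallyBounded_of_unifVanish {S : Set (czero 𝕜)} (hb : IsBounded S)
    (h : Tendsto (fun n => ⨆ f : S, ‖(f : czero 𝕜) n‖) atTop (𝓝 0)) :
    TotallyBounded S := by
  rcases S.eq_empty_or_nonempty with rfl | hS
  · exact totallyBounded_empty
  obtain ⟨C, hC⟩ := isBounded_iff_forall_norm_le.1 hb
  rw [Metric.totallyBounded_iff]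
  intro ε hε
  -- find N beyond which all coordinates are ≤ ε/4
  have hev : ∀ᶠ n in atTop, (⨆ f : S, ‖(f : czero 𝕜) n‖) < ε / 4 :=
    h.eventually_lt_const (by linarith)
  obtain ⟨N, hN⟩ := eventually_atTop.1 hev
  have hBdd : ∀ n, BddAbove (Set.range fun f : S => ‖(f : czero 𝕜) n‖) := by
    intro n
    refine ⟨C, ?_⟩
    rintro r ⟨⟨f, hf⟩, rfl⟩
    exact (czero_apply_norm_le f n).trans (hC f hf)
  have hcoord : ∀ n ≥ N, ∀ f ∈ S, ‖f n‖ ≤ ε / 4 := by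
    intro n hn f hf
    have : ‖f n‖ ≤ ⨆ g : S, ‖(g : czero 𝕜) n‖ := le_ciSup (hBdd n) ⟨f, hf⟩
    exact this.trans (le_of_lt (hN n hn))
  -- project to the first N coordinates
  set π : czero 𝕜 → (Fin N → 𝕜) := fun f i => f i with hπ
  have hπbdd : IsBounded (π '' S) := by
    rw [isBounded_iff_forall_norm_le]
    refine ⟨max C 0, ?_⟩
    rintro _ ⟨f, hf, rfl⟩
    apply pi_norm_le_iff_of_nonneg (le_max_right _ _) |>.2
    intro i
    exact le_max_of_le_left ((czero_apply_norm_le f i).trans (hC f hf))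
  have hπtb : TotallyBounded (π '' S) :=
    hπbdd.isCompact_closure.totallyBounded.subset subset_closure
  obtain ⟨t, hts, htfin, htcov⟩ := Metric.finite_approx_of_totallyBounded hπtb (ε / 4) (by linarith)
  -- choose preimages of the net
  have hchoice : ∀ y ∈ t, ∃ f ∈ S, π f = y := by
    intro y hy
    obtain ⟨f, hf, hfy⟩ := hts hy
    exact ⟨f, hf, hfy⟩
  choose sel hsel hselπ using hchoice
  classical
  haveI := htfin.to_subtype
  refine ⟨(fun y : {y // y ∈ t} => sel y y.2) '' Set.univ, (Set.finite_univ.image _), ?_⟩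
  intro f hf
  obtain ⟨y, hy, hfy⟩ := Set.mem_iUnion₂.1 (htcov ⟨f, hf, rfl⟩)
  set g := sel y hy with hg
  have hgS : g ∈ S := hsel y hy
  have hπg : π g = y := hselπ y hy
  have hdist : dist f g ≤ ε / 2 := by
    rw [dist_eq_norm]
    apply czero_norm_le (by linarith)
    intro n
    have hsub : (f - g) n = f n - g n := rfl
    rw [hsub]
    by_cases hn : n < N
    · have h1 : ‖f n - g n‖ = dist (π f ⟨n, hn⟩) (π g ⟨n, hn⟩) := by
        simp [hπ, dist_eq_norm]
      have h2 : dist (π f ⟨n, hn⟩) (π g ⟨n, hn⟩) ≤ dist (π f) (π g) :=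
        dist_le_pi_dist _ _ _
      have h3 : dist (π f) (π g) < ε / 4 := by
        rw [hπg]
        exact Metric.mem_ball.1 hfy
      rw [h1]; linarith
    · push_neg at hn
      have h1 : ‖f n‖ ≤ ε / 4 := hcoord n hn f hf
      have h2 : ‖g n‖ ≤ ε / 4 := hcoord n hn g hgS
      calc ‖f n - g n‖ ≤ ‖f n‖ + ‖g n‖ := norm_sub_le _ _
        _ ≤ ε / 2 := by linarith
  refine Set.mem_iUnion₂.2 ⟨g, ?_, ?_⟩
  · exact ⟨⟨y, hy⟩, Set.mem_univ _, rfl⟩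
  · exact Metric.mem_ball.2 (lt_of_le_of_lt hdist (by linarith))

theorem stmt6 [CompleteSpace E] :
    GelfandPhillips 𝕜 E ↔
      ∀ X : Set E, IsBounded X → ¬ TotallyBounded X →
        ∃ T : E →L[𝕜] czero 𝕜, ¬ TotallyBounded (T '' X) := by
  constructor
  · -- GP ⇒ operator criterion
    intro hGP X hXb hXtb
    have hnl : ¬ Limited 𝕜 X := fun hL => hXtb (hGP X hXb hL)
    rw [Limited] at hnl
    push_neg at hnl
    obtain ⟨χ, hχnull, hχbad⟩ := hnl
    -- Banach–Steinhaus to get a uniform bound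
    obtain ⟨C, hC⟩ : ∃ C, ∀ n, ‖χ n‖ ≤ C := by
      apply banach_steinhaus
      intro x
      obtain ⟨c, hc⟩ := (show Tendsto (fun n => ‖χ n x‖) atTop (𝓝 0) by
        simpa using (hχnull x).norm).bddAbove_range
      exact ⟨c, fun n => hc ⟨n, rfl⟩⟩
    set C' := max C 0 with hC'
    have hC'0 : 0 ≤ C' := le_max_right _ _
    have hC'le : ∀ n, ‖χ n‖ ≤ C' := fun n => le_max_of_le_left (hC n)
    -- define the operator
    set Tlin : E →ₗ[𝕜] czero 𝕜 :=
      { toFun := fun x =>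
          { toFun := fun n => χ n x
            continuous_toFun := continuous_of_discreteTopology
            zero_at_infty' := by rw [cocompact_eq_atTop (α := ℕ)]; exact hχnull x }
        map_add' := fun x y => by ext n; simp
        map_smul' := fun c x => by ext n; simp } with hTlin
    have hTbound : ∀ x, ‖Tlin x‖ ≤ C' * ‖x‖ := by
      intro x
      apply czero_norm_le (by positivity)
      intro n
      calc ‖χ n x‖ ≤ ‖χ n‖ * ‖x‖ := (χ n).le_opNorm x
        _ ≤ C' * ‖x‖ := by gcongr; exact hC'le n
    set T : E →L[𝕜] czero 𝕜 := LinearMap.mkContinuous Tlin C' hTbound with hT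
    refine ⟨T, fun hTB => hχbad ?_⟩
    have := unifVanish_of_totallyBounded hTB
    unfold UnifNull
    convert this using 2 with n
    have : ∀ x : E, ∀ n : ℕ, (T x) n = χ n x := fun _ _ => rfl
    rw [show (fun x : X => ‖χ n (x : E)‖) = fun x : X => ‖(T x) n‖ from rfl]
    exact supImage T X n
  · -- operator criterion ⇒ GP
    intro h B hBb hBlim
    by_contra hnTB
    obtain ⟨T, hT⟩ := h B hBb hnTB
    apply hT
    -- T '' B is bounded
    have hTBb : IsBounded (T '' B) := by
      obtain ⟨C, hC⟩ := isBounded_iff_forall_norm_le.1 hBb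
      rw [isBounded_iff_forall_norm_le]
      refine ⟨‖T‖ * C, ?_⟩
      rintro _ ⟨x, hx, rfl⟩
      calc ‖T x‖ ≤ ‖T‖ * ‖x‖ := T.le_opNorm x
        _ ≤ ‖T‖ * C := mul_le_mul_of_nonneg_left (hC x hx) (norm_nonneg T)
    -- the coordinate functionals composed with T are weak* null
    set χ : ℕ → E →L[𝕜] 𝕜 := fun n => (czeroEval 𝕜 n).comp T with hχ
    have hwsn : WeakStarNull χ := by
      intro x
      exact czero_tendsto (T x)
    have hun := hBlim χ hwsn
    unfold UnifNull at hun
    apply totallyBounded_of_unifVanish hTBb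
    convert hun using 2 with n
    exact (supImage T B n).symm
end
end

section
/- Every separable Banach space is Gelfand–Phillips: if E is a separable Banach space then every limited subset of E is totally bounded. -/
open Filter Topology Bornology

noncomputable section

variable {𝕜 E F : Type*} [RCLike 𝕜] [NormedAddCommGroup E] [NormedSpace 𝕜 E]
  [NormedAddCommGroup F] [NormedSpace 𝕜 F]

set_option maxHeartbeats 1000000 in
/-- Equicontinuity of a limited set, viewed as functions on the weak-star dual:
around each point of the dual unit ball there is a weak-star neighborhood on which the
evaluations at points of `B` vary by at most `δ`. -/
lemma limited_equicont [TopologicalSpace.SeparableSpace E]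
    {B : Set E} (hB : IsBounded B) (hlim : Limited 𝕜 B) {δ : ℝ} (hδ : 0 < δ)
    (f₀ : WeakDual 𝕜 E) (hf₀ : ‖WeakDual.toStrongDual f₀‖ ≤ 1) :
    ∃ U : Set (WeakDual 𝕜 E), IsOpen U ∧ f₀ ∈ U ∧
      ∀ g : WeakDual 𝕜 E, g ∈ U → ‖WeakDual.toStrongDual g‖ ≤ 1 →
        ∀ x ∈ B, ‖g x - f₀ x‖ ≤ δ := by
  by_contra hcon
  push_neg at hcon
  haveI : Nonempty E := ⟨0⟩
  obtain ⟨e, he⟩ := TopologicalSpace.exists_dense_seq E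
  -- basic weak-star neighborhoods of `f₀`
  set U : ℕ → Set (WeakDual 𝕜 E) := fun n =>
    ⋂ k ∈ Finset.range (n + 1),
      {g : WeakDual 𝕜 E | ‖g (e k) - f₀ (e k)‖ < 1 / (n + 1)} with hU
  have hUopen : ∀ n, IsOpen (U n) := by
    intro n
    refine isOpen_biInter_finset fun k _ => ?_
    have hc : Continuous fun g : WeakDual 𝕜 E => ‖g (e k) - f₀ (e k)‖ :=
      ((WeakDual.eval_continuous (e k)).sub continuous_const).norm
    exact isOpen_lt hc continuous_const
  have hUmem : ∀ n, f₀ ∈ U n := by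
    intro n
    refine Set.mem_iInter₂.mpr fun k _ => ?_
    simp only [Set.mem_setOf_eq, sub_self, norm_zero]
    positivity
  have hch : ∀ n, ∃ g : WeakDual 𝕜 E, g ∈ U n ∧ ‖WeakDual.toStrongDual g‖ ≤ 1 ∧
      ∃ x ∈ B, δ < ‖g x - f₀ x‖ := fun n => hcon (U n) (hUopen n) (hUmem n)
  choose g hgU hgnorm x hxB hgx using hch
  set χ : ℕ → E →L[𝕜] 𝕜 := fun n =>
    WeakDual.toStrongDual (g n) - WeakDual.toStrongDual f₀ with hχ
  have hχapp : ∀ n (y : E), χ n y = g n y - f₀ y := fun n y => rfl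
  have hχnorm : ∀ n, ‖χ n‖ ≤ 2 := by
    intro n
    have h1 := hgnorm n
    calc ‖χ n‖ ≤ ‖WeakDual.toStrongDual (g n)‖ + ‖WeakDual.toStrongDual f₀‖ :=
          norm_sub_le _ _
      _ ≤ 2 := by linarith
  have hwsn : WeakStarNull χ := by
    intro z
    rw [NormedAddCommGroup.tendsto_nhds_zero]
    intro ε hε
    obtain ⟨k, hk⟩ := he.exists_dist_lt z (show (0 : ℝ) < ε / 6 by positivity)
    rw [dist_eq_norm] at hk
    obtain ⟨N, hN⟩ := exists_nat_gt (3 / ε)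
    filter_upwards [eventually_ge_atTop (max k N)] with n hn
    have hkn : k ≤ n := le_trans (le_max_left _ _) hn
    have hNn : N ≤ n := le_trans (le_max_right _ _) hn
    have hek : ‖χ n (e k)‖ < 1 / (n + 1) := by
      have hg := hgU n
      rw [hU] at hg
      have := Set.mem_iInter₂.mp hg k (Finset.mem_range.mpr (Nat.lt_succ_of_le hkn))
      simpa [hχapp] using this
    have hsmall : (1 : ℝ) / (n + 1) < ε / 3 := by
      have hNr : (3 : ℝ) / ε < N := hN
      have hnr : (N : ℝ) ≤ n := Nat.cast_le.mpr hNn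
      have h1 : (3 : ℝ) / ε < (n : ℝ) + 1 := by linarith
      have h2 : (3 : ℝ) < ((n : ℝ) + 1) * ε := by
        rw [div_lt_iff₀ hε] at h1
        linarith [h1]
      rw [div_lt_div_iff₀ (by positivity) (by norm_num : (0:ℝ) < 3)]
      nlinarith
    have hsplit : χ n z = χ n (e k) + χ n (z - e k) := by
      rw [← map_add]
      congr 1
      abel
    have h2 : ‖χ n (z - e k)‖ ≤ 2 * (ε / 6) := by
      calc ‖χ n (z - e k)‖ ≤ ‖χ n‖ * ‖z - e k‖ := (χ n).le_opNorm _
        _ ≤ 2 * (ε / 6) := by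
            have := hχnorm n
            have hz : ‖z - e k‖ ≤ ε / 6 := le_of_lt hk
            have h0 : (0:ℝ) ≤ ‖z - e k‖ := norm_nonneg _
            nlinarith [norm_nonneg (χ n)]
    calc ‖χ n z‖ ≤ ‖χ n (e k)‖ + ‖χ n (z - e k)‖ := by
          rw [hsplit]; exact norm_add_le _ _
      _ < ε / 3 + 2 * (ε / 6) := by linarith
      _ ≤ ε := by linarith
  have hun := hlim χ hwsn
  obtain ⟨C, hC⟩ := isBounded_iff_forall_norm_le.mp hB
  obtain ⟨n, hn⟩ := (hun.eventually_lt_const hδ).exists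
  have hCnn : (0 : ℝ) ≤ C := le_trans (norm_nonneg _) (hC _ (hxB n))
  have hbdd : BddAbove (Set.range fun y : B => ‖χ n (y : E)‖) := by
    refine ⟨2 * C, ?_⟩
    rintro r ⟨y, rfl⟩
    calc ‖χ n (y : E)‖ ≤ ‖χ n‖ * ‖(y : E)‖ := (χ n).le_opNorm _
      _ ≤ 2 * C := by
          have h1 := hχnorm n
          have h2 := hC _ y.2
          nlinarith [norm_nonneg (χ n), norm_nonneg (y : E)]
  have hle : ‖χ n (x n)‖ ≤ ⨆ y : B, ‖χ n (y : E)‖ :=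
    le_ciSup hbdd (⟨x n, hxB n⟩ : B)
  have hlt : δ < ‖χ n (x n)‖ := by rw [hχapp]; exact hgx n
  linarith [lt_of_le_of_lt hle hn]

set_option maxHeartbeats 1000000 in
theorem stmt9 [CompleteSpace E] [TopologicalSpace.SeparableSpace E] :
    GelfandPhillips 𝕜 E := by
  intro B hB hlim
  rw [Metric.totallyBounded_iff]
  intro δ hδ
  -- the weak-star compact dual unit ball
  set K : Set (WeakDual 𝕜 E) := WeakDual.toStrongDual ⁻¹' Metric.closedBall 0 1 with hKdef
  have hK : IsCompact K := WeakDual.isCompact_closedBall (𝕜 := 𝕜) (0 : StrongDual 𝕜 E) 1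
  have hKnorm : ∀ f : WeakDual 𝕜 E, f ∈ K → ‖WeakDual.toStrongDual f‖ ≤ 1 := by
    intro f hf
    simpa [hKdef, Metric.mem_closedBall, dist_zero_right] using hf
  -- equicontinuity neighborhoods with parameter δ/8
  have hδ8 : (0 : ℝ) < δ / 8 := by linarith
  have hnbhd : ∀ f : K, ∃ U : Set (WeakDual 𝕜 E), IsOpen U ∧ (f : WeakDual 𝕜 E) ∈ U ∧
      ∀ g : WeakDual 𝕜 E, g ∈ U → ‖WeakDual.toStrongDual g‖ ≤ 1 →
        ∀ x ∈ B, ‖g x - (f : WeakDual 𝕜 E) x‖ ≤ δ / 8 :=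
    fun f => limited_equicont hB hlim hδ8 f (hKnorm f f.2)
  choose U hUopen hUmem hUprop using hnbhd
  obtain ⟨t, ht⟩ := hK.elim_finite_subcover U hUopen
    (fun f hf => Set.mem_iUnion.mpr ⟨⟨f, hf⟩, hUmem _⟩)
  -- the finite-dimensional "sampling" map
  set P : E → (t → 𝕜) := fun y i => ((i : K) : WeakDual 𝕜 E) y with hP
  obtain ⟨C, hC⟩ := isBounded_iff_forall_norm_le.mp hB
  have hPB : IsBounded (P '' B) := by
    rw [isBounded_iff_forall_norm_le]
    refine ⟨max C 0, ?_⟩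
    rintro _ ⟨y, hy, rfl⟩
    rw [pi_norm_le_iff_of_nonneg (le_max_right _ _)]
    intro i
    have h1 : ‖WeakDual.toStrongDual ((i : K) : WeakDual 𝕜 E)‖ ≤ 1 :=
      hKnorm _ (i : K).2
    calc ‖P y i‖ ≤ ‖WeakDual.toStrongDual ((i : K) : WeakDual 𝕜 E)‖ * ‖y‖ :=
          (WeakDual.toStrongDual ((i : K) : WeakDual 𝕜 E)).le_opNorm y
      _ ≤ max C 0 := by
          have h2 := hC y hy
          have h3 : ‖y‖ ≤ max C 0 := le_trans h2 (le_max_left _ _)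
          nlinarith [norm_nonneg y,
            norm_nonneg (WeakDual.toStrongDual ((i : K) : WeakDual 𝕜 E))]
  have hPBtb : TotallyBounded (P '' B) :=
    hPB.isCompact_closure.totallyBounded.subset subset_closure
  -- a δ/4-net inside `P '' B`
  obtain ⟨s, hsub, hsfin, hscov⟩ := totallyBounded_iff_subset.mp hPBtb
    {p : (t → 𝕜) × (t → 𝕜) | dist p.1 p.2 < δ / 4} (Metric.dist_mem_uniformity (by linarith))
  -- pull the net centers back to `B`
  have hcen : ∀ y ∈ s, ∃ c ∈ B, P c = y := by
    intro y hy
    obtain ⟨c, hc, hcy⟩ := hsub hy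
    exact ⟨c, hc, hcy⟩
  choose! c hcB hcP using hcen
  refine ⟨c '' s, hsfin.image c, ?_⟩
  intro z hz
  obtain ⟨y, hy, hzy⟩ := Set.mem_iUnion₂.mp (hscov ⟨z, hz, rfl⟩)
  have hdist : dist (P z) (P (c y)) < δ / 4 := by
    rw [hcP y hy]; exact hzy
  -- each sampled functional moves `z` and `c y` close together
  have hsample : ∀ i : t, ‖((i : K) : WeakDual 𝕜 E) z - ((i : K) : WeakDual 𝕜 E) (c y)‖ < δ / 4 := by
    intro i
    have h := dist_le_pi_dist (P z) (P (c y)) i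
    rw [dist_eq_norm] at h
    exact lt_of_le_of_lt h hdist
  -- norm estimate via the dual characterization of the norm
  have hkey : ‖z - c y‖ ≤ δ / 2 := by
    refine NormedSpace.norm_le_dual_bound 𝕜 _ (by linarith) ?_
    intro f
    rcases eq_or_ne f 0 with rfl | hf
    · simp
    · have hfpos : (0 : ℝ) < ‖f‖ := norm_pos_iff.mpr hf
      set gd : StrongDual 𝕜 E := ‖f‖⁻¹ • f with hgd
      set gw : WeakDual 𝕜 E := WeakDual.toStrongDual.symm gd with hgw
      have hgwd : WeakDual.toStrongDual gw = gd := LinearEquiv.apply_symm_apply _ _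
      have hgnorm : ‖WeakDual.toStrongDual gw‖ ≤ 1 := by
        rw [hgwd, hgd, norm_smul, norm_inv, norm_norm]
        rw [inv_mul_cancel₀ (ne_of_gt hfpos)]
      have hgK : gw ∈ K := by
        simp only [hKdef, Set.mem_preimage, Metric.mem_closedBall, dist_zero_right]
        exact hgnorm
      obtain ⟨i, hit, hiU⟩ : ∃ i ∈ t, gw ∈ U i := by
        have := ht hgK
        obtain ⟨i, hi⟩ := Set.mem_iUnion.mp this
        obtain ⟨hit, hgi⟩ := Set.mem_iUnion.mp hi
        exact ⟨i, hit, hgi⟩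
      have h1 : ‖gw z - ((i : WeakDual 𝕜 E)) z‖ ≤ δ / 8 :=
        hUprop i gw hiU hgnorm z hz
      have h2 : ‖gw (c y) - ((i : WeakDual 𝕜 E)) (c y)‖ ≤ δ / 8 :=
        hUprop i gw hiU hgnorm (c y) (hcB y hy)
      have h3 := hsample ⟨i, hit⟩
      have h4 : ‖gw z - gw (c y)‖ ≤ δ / 2 := by
        have : gw z - gw (c y) =
            (gw z - (i : WeakDual 𝕜 E) z) +
            ((i : WeakDual 𝕜 E) z - (i : WeakDual 𝕜 E) (c y)) +
            ((i : WeakDual 𝕜 E) (c y) - gw (c y)) := by abel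
        rw [this]
        calc _ ≤ ‖(gw z - (i : WeakDual 𝕜 E) z) +
              ((i : WeakDual 𝕜 E) z - (i : WeakDual 𝕜 E) (c y))‖ +
              ‖(i : WeakDual 𝕜 E) (c y) - gw (c y)‖ := norm_add_le _ _
          _ ≤ ‖gw z - (i : WeakDual 𝕜 E) z‖ +
              ‖(i : WeakDual 𝕜 E) z - (i : WeakDual 𝕜 E) (c y)‖ +
              ‖(i : WeakDual 𝕜 E) (c y) - gw (c y)‖ := by
                have := norm_add_le (gw z - (i : WeakDual 𝕜 E) z)
                  ((i : WeakDual 𝕜 E) z - (i : WeakDual 𝕜 E) (c y))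
                linarith
          _ ≤ δ / 2 := by
                rw [norm_sub_rev] at h2
                linarith [le_of_lt h3]
      have hfz : f (z - c y) = ‖f‖ • (gw z - gw (c y)) := by
        have hgdz : ∀ w : E, gw w = ‖f‖⁻¹ • f w := by
          intro w
          have : gw w = gd w := by rw [← hgwd]; rfl
          rw [this, hgd]
          simp
        rw [hgdz, hgdz, map_sub]
        simp only [smul_sub, smul_smul]
        rw [RCLike.real_smul_eq_coe_mul, RCLike.real_smul_eq_coe_mul]
        push_cast
        have hne : (‖f‖ : 𝕜) ≠ 0 := by
          exact_mod_cast ne_of_gt hfpos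
        field_simp
      calc ‖f (z - c y)‖ = ‖f‖ * ‖gw z - gw (c y)‖ := by
            rw [hfz, norm_smul, Real.norm_eq_abs, abs_of_pos hfpos]
        _ ≤ δ / 2 * ‖f‖ := by nlinarith [norm_nonneg (gw z - gw (c y))]
  exact Set.mem_iUnion₂.mpr ⟨c y, Set.mem_image_of_mem c hy,
    Metric.mem_ball.mpr (by rw [dist_eq_norm]; linarith)⟩
end
end

section
/- Every subspace (closed linear subspace with the induced norm) of c₀ is strongly Gelfand–Phillips: if E is a closed subspace of c₀ then the sequence of restricted coordinate functionals (e_n'|_E) is weak* null in E' and every bounded subset B of E with sup_{x∈B} |e_n'(x)| → 0 is totally bounded. -/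
open Filter Topology Bornology

noncomputable section

variable {𝕜 E F : Type*} [RCLike 𝕜] [NormedAddCommGroup E] [NormedSpace 𝕜 E]
  [NormedAddCommGroup F] [NormedSpace 𝕜 F]

set_option maxHeartbeats 1000000 in
set_option maxHeartbeats 1000000 in
set_option synthInstance.maxHeartbeats 400000 in
theorem stmt10 {𝕜 : Type*} [RCLike 𝕜] (E : Submodule 𝕜 (czero 𝕜))
    (hE : IsClosed (E : Set (czero 𝕜))) :
    ∃ χ : ℕ → E →L[𝕜] 𝕜,
      (∀ (n : ℕ) (x : E), χ n x = (x : czero 𝕜) n) ∧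
      WeakStarNull (𝕜 := 𝕜) (E := ↥E) χ ∧
      ∀ B : Set E, IsBounded B →
        Tendsto (fun n => ⨆ x : B, ‖χ n (x : E)‖) atTop (𝓝 0) →
        TotallyBounded B := by
  have coord_le : ∀ (f : czero 𝕜) (n : ℕ), ‖f n‖ ≤ ‖f‖ := fun f n => by
    rw [← ZeroAtInftyContinuousMap.norm_toBCF_eq_norm]
    exact f.toBCF.norm_coe_le_norm n
  refine ⟨fun n => LinearMap.mkContinuous
    { toFun := fun x : E => (x : czero 𝕜) n
      map_add' := fun x y => by simp
      map_smul' := fun c x => by simp } 1 (fun x => by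
        simpa using coord_le (x : czero 𝕜) n), fun n x => rfl, ?_, ?_⟩
  · intro x
    have := x.1.zero_at_infty'
    rw [cocompact_eq_atTop (α := ℕ)] at this
    exact this
  · intro B hB hsup
    rcases Metric.isBounded_iff_subset_closedBall 0 |>.1 hB with ⟨M, hM⟩
    have hxM : ∀ x ∈ B, ‖(x : czero 𝕜)‖ ≤ M := by
      intro x hx
      have := hM hx
      exact mem_closedBall_zero_iff.1 this
    rcases B.eq_empty_or_nonempty with rfl | ⟨b0, hb0⟩
    · exact totallyBounded_empty
    rw [Metric.totallyBounded_iff]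
    intro ε hε
    -- get N such that for n ≥ N, sup over B of ‖x n‖ < ε/4
    have h4 : (0:ℝ) < ε/4 := by linarith
    rcases (Metric.tendsto_atTop.1 hsup (ε/4) h4) with ⟨N, hN⟩
    have hbdd : ∀ n, BddAbove (Set.range fun x : B => ‖(x : czero 𝕜) n‖) := by
      intro n
      refine ⟨M, ?_⟩
      rintro r ⟨x, rfl⟩
      exact le_trans (coord_le _ n) (hxM x x.2)
    have hcoord_small : ∀ n ≥ N, ∀ x ∈ B, ‖(x : czero 𝕜) n‖ < ε/4 := by
      intro n hn x hx
      have h1 : |(⨆ y : B, ‖((y : E) : czero 𝕜) n‖) - 0| < ε/4 := by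
        have := hN n hn; rw [Real.dist_eq] at this; exact this
      have h2 : ‖(x : czero 𝕜) n‖ ≤ ⨆ y : B, ‖(y : czero 𝕜) n‖ :=
        le_ciSup (hbdd n) ⟨x, hx⟩
      have h3 : (0:ℝ) ≤ ⨆ y : B, ‖(y : czero 𝕜) n‖ := le_trans (norm_nonneg _) h2
      calc ‖(x : czero 𝕜) n‖ ≤ ⨆ y : B, ‖(y : czero 𝕜) n‖ := h2
        _ < ε/4 := by rw [sub_zero, abs_of_nonneg h3] at h1; exact h1
    -- project to first N coordinates
    set P : E → (Fin N → 𝕜) := fun x i => (x : czero 𝕜) i with hP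
    have hPB : TotallyBounded (P '' B) := by
      refine (isCompact_closedBall (0 : Fin N → 𝕜) M).totallyBounded.subset ?_
      rintro _ ⟨x, hx, rfl⟩
      rw [Metric.mem_closedBall, dist_zero_right, pi_norm_le_iff_of_nonneg
        (le_trans (norm_nonneg (x : czero 𝕜)) (hxM x hx))]
      intro i
      exact le_trans (coord_le _ i) (hxM x hx)
    rcases (totallyBounded_iff_subset.1 hPB) _
        (Metric.dist_mem_uniformity h4) with ⟨t, hts, htfin, htcov⟩
    -- choose preimages in B
    choose g hgB hgP using fun c (hc : c ∈ t) => hts hc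
    classical
    refine ⟨(fun c => if hc : c ∈ t then g c hc else b0) '' t,
      htfin.image _, ?_⟩
    intro x hx
    rcases Set.mem_iUnion₂.1 (htcov ⟨x, hx, rfl⟩) with ⟨c, hc, hxc⟩
    simp only [Set.mem_setOf_eq] at hxc
    refine Set.mem_iUnion₂.2 ⟨_, Set.mem_image_of_mem _ hc, ?_⟩
    rw [dif_pos hc]
    set y := g c hc with hy
    have hyB := hgB c hc
    have hyP : P y = c := hgP c hc
    -- coordinatewise bound on x - y
    have key : ∀ n, ‖((x : czero 𝕜) - (y : czero 𝕜)) n‖ ≤ ε/2 := by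
      intro n
      rcases lt_or_ge n N with hn | hn
      · have : dist (P x) c < ε/4 := hxc
        rw [← hyP] at this
        have := le_trans (dist_le_pi_dist (P x) (P y) ⟨n, hn⟩) this.le
        simpa [P, dist_eq_norm] using this.trans (by linarith)
      · have h1 := hcoord_small n hn x hx
        have h2 := hcoord_small n hn y hyB
        have : ‖((x : czero 𝕜) - (y : czero 𝕜)) n‖ ≤
            ‖(x : czero 𝕜) n‖ + ‖(y : czero 𝕜) n‖ := by
          simpa using norm_sub_le ((x : czero 𝕜) n) ((y : czero 𝕜) n)
        linarith
    have hnorm : ‖(x : czero 𝕜) - (y : czero 𝕜)‖ ≤ ε/2 := by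
      rw [← ZeroAtInftyContinuousMap.norm_toBCF_eq_norm,
        BoundedContinuousFunction.norm_le (by linarith)]
      exact key
    rw [Metric.mem_ball, Subtype.dist_eq, dist_eq_norm]
    calc ‖(x : czero 𝕜) - (y : czero 𝕜)‖ ≤ ε/2 := hnorm
      _ < ε := by linarith
end
end

section
/- If a Banach space E is strongly Gelfand–Phillips then E is isomorphic (linearly homeomorphic) to a closed subspace of c₀. -/
open Filter Topology Bornology

noncomputable section

variable {𝕜 E F : Type*} [RCLike 𝕜] [NormedAddCommGroup E] [NormedSpace 𝕜 E]
  [NormedAddCommGroup F] [NormedSpace 𝕜 F]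

/-- Key lemma: a sequence of unit-ball vectors on which `χ` is uniformly small has
totally bounded range. -/
lemma key_tb {χ : ℕ → E →L[𝕜] 𝕜}
    (hnull : WeakStarNull χ)
    (hGP : ∀ B : Set E, IsBounded B → ¬ TotallyBounded B → ¬ UnifNull χ B)
    (u : ℕ → E) (hu : ∀ k, ‖u k‖ ≤ 1)
    (hdec : ∀ n k, ‖χ n (u k)‖ ≤ 1 / (k + 1)) :
    TotallyBounded (Set.range u) := by
  by_contra hTB
  refine hGP _ ?_ hTB ?_
  · refine (Metric.isBounded_closedBall (x := (0 : E)) (r := 1)).subset ?_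
    rintro _ ⟨k, rfl⟩
    simpa [Metric.mem_closedBall, dist_eq_norm] using hu k
  · rw [UnifNull, Metric.tendsto_atTop]
    intro ε hε
    obtain ⟨Kk, hK⟩ := exists_nat_one_div_lt (K := ℝ) (ε := ε / 2) (by linarith)
    have hev : ∀ᶠ n in atTop, ∀ k ∈ Finset.range Kk, ‖χ n (u k)‖ < ε / 2 := by
      rw [eventually_all_finset]
      intro k _
      have h1 : Tendsto (fun n => ‖χ n (u k)‖) atTop (𝓝 0) := by
        simpa using (hnull (u k)).norm
      exact h1.eventually_lt_const (by linarith)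
    obtain ⟨N, hN⟩ := eventually_atTop.1 hev
    refine ⟨N, fun n hn => ?_⟩
    have hsup : (⨆ x : (Set.range u), ‖χ n (x : E)‖) ≤ ε / 2 := by
      refine Real.iSup_le ?_ (by linarith)
      rintro ⟨_, k, rfl⟩
      by_cases hk : k < Kk
      · exact le_of_lt (hN n hn k (Finset.mem_range.2 hk))
      · refine le_trans (hdec n k) (le_trans ?_ hK.le)
        have : (Kk : ℝ) + 1 ≤ (k : ℝ) + 1 := by
          have := Nat.cast_le (α := ℝ).2 (not_lt.1 hk)
          linarith
        exact one_div_le_one_div_of_le (by positivity) this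
    have hnonneg : (0 : ℝ) ≤ ⨆ x : (Set.range u), ‖χ n (x : E)‖ :=
      Real.iSup_nonneg fun _ => norm_nonneg _
    rw [Real.dist_eq, sub_zero, abs_of_nonneg hnonneg]
    linarith

theorem stmt11 [CompleteSpace E]
    (h : ∃ χ : ℕ → E →L[𝕜] 𝕜, WeakStarNull χ ∧
      ∀ B : Set E, IsBounded B → ¬ TotallyBounded B → ¬ UnifNull χ B) :
    ∃ T : E →L[𝕜] czero 𝕜, IsClosed (Set.range T) ∧
      ∃ c > (0 : ℝ), ∀ x : E, c * ‖x‖ ≤ ‖T x‖ := by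
  classical
  obtain ⟨χ, hnull, hGP⟩ := h
  -- Banach–Steinhaus: uniform bound on the norms of χ n
  obtain ⟨M, hM⟩ : ∃ M, ∀ n, ‖χ n‖ ≤ M := by
    refine banach_steinhaus fun x => ?_
    have h1 : Tendsto (fun n => ‖χ n x‖) atTop (𝓝 0) := by simpa using (hnull x).norm
    obtain ⟨C, hC⟩ := h1.bddAbove_range
    exact ⟨C, fun n => hC (Set.mem_range_self n)⟩
  have hM0 : 0 ≤ M := le_trans (norm_nonneg _) (hM 0)
  -- the common kernel K is finite dimensional
  set K : Submodule 𝕜 E := ⨅ n, LinearMap.ker (χ n : E →ₗ[𝕜] 𝕜) with hKdef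
  have hKclosed : IsClosed (K : Set E) := by
    have : (K : Set E) = ⋂ n, (LinearMap.ker (χ n : E →ₗ[𝕜] 𝕜) : Set E) := by
      simp [hKdef, Submodule.coe_iInf]
    rw [this]
    exact isClosed_iInter fun n => ContinuousLinearMap.isClosed_ker (χ n)
  have : CompleteSpace K := hKclosed.completeSpace_coe
  have hKmem : ∀ x : E, x ∈ K ↔ ∀ n, χ n x = 0 := by
    intro x; simp [hKdef, Submodule.mem_iInf, LinearMap.mem_ker]
  have hKfd : FiniteDimensional 𝕜 K := by
    have htb : TotallyBounded ((K : Set E) ∩ Metric.closedBall 0 1) := by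
      by_contra hTB
      refine hGP _ ?_ hTB ?_
      · exact (Metric.isBounded_closedBall (x := (0 : E)) (r := 1)).subset
          Set.inter_subset_right
      · have hz : ∀ n (x : ((K : Set E) ∩ Metric.closedBall 0 1 : Set E)), ‖χ n (x : E)‖ = 0 := by
          rintro n ⟨x, hxK, -⟩
          simp [(hKmem x).1 hxK n]
      
        have : (fun n => ⨆ x : ((K : Set E) ∩ Metric.closedBall 0 1 : Set E), ‖χ n (x : E)‖)
            = fun _ => 0 := by
          funext n
          have hne : Nonempty ((K : Set E) ∩ Metric.closedBall 0 1 : Set E) :=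
            ⟨⟨0, K.zero_mem, by simp⟩⟩
          simp only [hz n]
          exact ciSup_const
        rw [UnifNull, this]
        exact tendsto_const_nhds
    have hcomp : IsCompact (Metric.closedBall (0 : K) 1) := by
      have hpre : Metric.closedBall (0 : K) 1
          = (Subtype.val : K → E) ⁻¹' ((K : Set E) ∩ Metric.closedBall 0 1) := by
        ext x
        simp [Metric.mem_closedBall, dist_eq_norm, x.2]
      have htb' : TotallyBounded (Metric.closedBall (0 : K) 1) := by
        rw [hpre]
        exact totallyBounded_preimage isUniformEmbedding_subtype_val.isUniformInducing htb
      exact TotallyBounded.isCompact_of_isClosed htb' Metric.isClosed_closedBall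
    exact FiniteDimensional.of_isCompact_closedBall₀ 𝕜 one_pos hcomp
  -- dual basis functionals on K, extended to E
  set d : ℕ := Module.finrank 𝕜 K with hd
  let b : Module.Basis (Fin d) 𝕜 K := Module.finBasis 𝕜 K
  have hψ : ∀ i : Fin d, ∃ g : E →L[𝕜] 𝕜,
      (∀ x : K, g x = LinearMap.toContinuousLinearMap (b.coord i) x) := by
    intro i
    obtain ⟨g, hg, -⟩ := exists_extension_norm_eq (K : Submodule 𝕜 E)
      (LinearMap.toContinuousLinearMap (b.coord i))
    exact ⟨g, hg⟩
  choose ψ hψ using hψ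
  -- the interleaved family of functionals
  set ξ : ℕ → E →L[𝕜] 𝕜 := fun n => if hn : n < d then ψ ⟨n, hn⟩ else χ (n - d) with hξ
  set C : ℝ := M + ∑ i : Fin d, ‖ψ i‖ with hC
  have hξnorm : ∀ n, ‖ξ n‖ ≤ C := by
    intro n
    by_cases hn : n < d
    · rw [hξ]; simp only [dif_pos hn]
      have h1 : ‖ψ (⟨n, hn⟩ : Fin d)‖ ≤ ∑ i : Fin d, ‖ψ i‖ :=
        Finset.single_le_sum (f := fun i => ‖ψ i‖) (fun i _ => norm_nonneg _)
          (Finset.mem_univ _)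
      rw [hC]; linarith
    · rw [hξ]; simp only [dif_neg hn]
      have h2 : (0 : ℝ) ≤ ∑ i : Fin d, ‖ψ i‖ :=
        Finset.sum_nonneg fun i _ => norm_nonneg _
      rw [hC]; linarith [hM (n - d)]
  have hξ_zero : ∀ x : E, Tendsto (fun n => ξ n x) (cocompact ℕ) (𝓝 0) := by
    intro x
    rw [cocompact_eq_atTop]
    have h1 : Tendsto (fun n => χ (n - d) x) atTop (𝓝 0) :=
      (hnull x).comp (tendsto_sub_atTop_nat d)
    refine h1.congr' ?_
    filter_upwards [eventually_ge_atTop d] with n hn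
    rw [hξ]; simp [Nat.not_lt.2 hn]
  -- construct the operator T
  let Tfun : E → czero 𝕜 := fun x =>
    { toFun := fun n => ξ n x
      continuous_toFun := continuous_of_discreteTopology
      zero_at_infty' := hξ_zero x }
  have hTfun_apply : ∀ x n, Tfun x n = ξ n x := fun _ _ => rfl
  have hpt : ∀ (f : czero 𝕜) (n : ℕ), ‖f n‖ ≤ ‖f‖ := by
    intro f n
    rw [← ZeroAtInftyContinuousMap.norm_toBCF_eq_norm]
    exact f.toBCF.norm_coe_le_norm n
  have hnorm_le : ∀ (f : czero 𝕜) (c : ℝ), 0 ≤ c → (∀ n, ‖f n‖ ≤ c) → ‖f‖ ≤ c := by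
    intro f c hc hfc
    rw [← ZeroAtInftyContinuousMap.norm_toBCF_eq_norm]
    exact (BoundedContinuousFunction.norm_le hc).2 hfc
  let Tl : E →ₗ[𝕜] czero 𝕜 :=
    { toFun := Tfun
      map_add' := by intro x y; ext n; simp [hTfun_apply, map_add]
      map_smul' := by intro c x; ext n; simp [hTfun_apply, map_smul] }
  let T : E →L[𝕜] czero 𝕜 := Tl.mkContinuous C <| by
    intro x
    refine hnorm_le _ _ (by positivity) fun n => ?_
    calc ‖ξ n x‖ ≤ ‖ξ n‖ * ‖x‖ := (ξ n).le_opNorm x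
      _ ≤ C * ‖x‖ := by
          have := hξnorm n
          have := norm_nonneg x
          nlinarith
  have hT_apply : ∀ x n, T x n = ξ n x := fun _ _ => rfl
  -- T is bounded below
  have hbdd : ∃ c > (0 : ℝ), ∀ x : E, c * ‖x‖ ≤ ‖T x‖ := by
    by_contra hc
    push_neg at hc
    have hex : ∀ k : ℕ, ∃ u : E, ‖u‖ = 1 ∧ ‖T u‖ < 1 / (k + 1) := by
      intro k
      obtain ⟨x, hx⟩ := hc (1 / (k + 1)) (by positivity)
      have hx0 : x ≠ 0 := by
        rintro rfl
        simp at hx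
      have hxn : (0:ℝ) < ‖x‖ := norm_pos_iff.2 hx0
      refine ⟨(((‖x‖⁻¹ : ℝ) : 𝕜)) • x, ?_, ?_⟩
      · rw [norm_smul, RCLike.norm_ofReal, abs_of_nonneg (by positivity),
          inv_mul_cancel₀ (norm_ne_zero_iff.2 hx0)]
      · have e := norm_smul (α := 𝕜) (β := czero 𝕜) (((‖x‖⁻¹ : ℝ) : 𝕜)) (T x)
        rw [map_smul, e, RCLike.norm_ofReal, abs_of_nonneg (by positivity),
          inv_mul_lt_iff₀ hxn, mul_comm]
        exact hx
    choose u hu1 hu2 using hex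
    have hdec : ∀ n k, ‖χ n (u k)‖ ≤ 1 / (k + 1) := by
      intro n k
      have h1 : χ n (u k) = ξ (n + d) (u k) := by
        rw [hξ]; simp [Nat.not_lt.2 (Nat.le_add_left d n)]
      rw [h1, ← hT_apply]
      exact le_trans (hpt _ _) (hu2 k).le
    have htb := key_tb hnull hGP u (fun k => (hu1 k).le) hdec
    have hcomp : IsCompact (closure (Set.range u)) :=
      TotallyBounded.isCompact_of_isClosed htb.closure isClosed_closure
    obtain ⟨x, -, φ, hφ, hconv⟩ := hcomp.tendsto_subseq
      (fun k => subset_closure (Set.mem_range_self k))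
    have hxnorm : ‖x‖ = 1 := by
      have := (hconv.norm : Tendsto (fun j => ‖u (φ j)‖) atTop (𝓝 ‖x‖))
      have h2 : Tendsto (fun j : ℕ => (1 : ℝ)) atTop (𝓝 ‖x‖) := by
        refine this.congr fun j => ?_
        rw [Function.comp_apply]  -- maybe needed
        exact (hu1 (φ j)).symm ▸ rfl
      exact tendsto_nhds_unique h2 tendsto_const_nhds
    have hTx : T x = 0 := by
      have h1 : Tendsto (fun j => T (u (φ j))) atTop (𝓝 (T x)) :=
        (T.continuous.tendsto x).comp hconv
      have h2 : Tendsto (fun j => ‖T (u (φ j))‖) atTop (𝓝 0) := by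
        have hle : ∀ j, ‖T (u (φ j))‖ ≤ 1 / (j + 1) := by
          intro j
          refine le_trans (hu2 (φ j)).le ?_
          have hφj : (j : ℝ) + 1 ≤ (φ j : ℝ) + 1 := by
            have h5 : (j : ℝ) ≤ (φ j : ℝ) := Nat.cast_le.2 (hφ.le_apply (x := j))
            linarith
          exact one_div_le_one_div_of_le (by positivity) hφj
        refine squeeze_zero (fun j => norm_nonneg _) hle ?_
        exact tendsto_one_div_add_atTop_nhds_zero_nat
      have h3 : Tendsto (fun j => ‖T (u (φ j))‖) atTop (𝓝 ‖T x‖) := h1.norm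
      have := tendsto_nhds_unique h3 h2
      exact norm_eq_zero.1 this
    have hxi : ∀ n, ξ n x = 0 := by
      intro n
      have := congrFun (congrArg DFunLike.coe hTx) n
      simpa [hT_apply] using this
    have hxK : x ∈ K := by
      rw [hKmem]
      intro n
      have := hxi (n + d)
      rw [hξ] at this
      simpa [dif_neg (Nat.not_lt.2 (Nat.le_add_left d n)), Nat.add_sub_cancel] using this
    have hcoord : ∀ i : Fin d, b.coord i ⟨x, hxK⟩ = 0 := by
      intro i
      have h1 := hψ i ⟨x, hxK⟩
      have h2 : ψ i x = 0 := by
        have := hxi i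
        rw [hξ] at this
        simpa [i.isLt] using this
      rw [h2] at h1  -- careful direction
      simpa using h1.symm
    have hx0 : (⟨x, hxK⟩ : K) = 0 := by
      refine b.ext_elem fun i => ?_
      simpa [Module.Basis.coord_apply] using hcoord i
    have : x = 0 := congrArg Subtype.val hx0
    rw [this, norm_zero] at hxnorm
    exact one_ne_zero hxnorm.symm
  obtain ⟨c, hc0, hcb⟩ := hbdd
  refine ⟨T, ?_, c, hc0, hcb⟩
  have hanti : AntilipschitzWith (Real.toNNReal c⁻¹) T := by
    refine T.antilipschitz_of_bound fun x => ?_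
    rw [Real.coe_toNNReal _ (by positivity), inv_mul_eq_div, le_div_iff₀ hc0, mul_comm]
    exact hcb x
  exact hanti.isClosed_range T.uniformContinuous
end
end

section
/- Let E be a Banach space and (χ_n) a weak* null sequence in E' such that every bounded subset B of E with sup_{x∈B} |χ_n(x)| → 0 is totally bounded. Then the closed subspace Z = ⋂_n ker χ_n is finite dimensional. -/
open Filter Topology Bornology

noncomputable section

variable {𝕜 E F : Type*} [RCLike 𝕜] [NormedAddCommGroup E] [NormedSpace 𝕜 E]
  [NormedAddCommGroup F] [NormedSpace 𝕜 F]

theorem stmt12 [CompleteSpace E] (χ : ℕ → E →L[𝕜] 𝕜) (hχ : WeakStarNull χ)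
    (h : ∀ B : Set E, IsBounded B → UnifNull χ B → TotallyBounded B) :
    FiniteDimensional 𝕜 ↥(⨅ n : ℕ, LinearMap.ker (χ n : E →ₗ[𝕜] 𝕜)) := by
  set Z := ⨅ n : ℕ, LinearMap.ker (χ n : E →ₗ[𝕜] 𝕜) with hZ
  set S : Set E := (Z : Set E) ∩ Metric.closedBall 0 1 with hS
  have hzero : ∀ x ∈ S, ∀ n, χ n x = 0 := by
    intro x hx n
    have := hx.1
    simp only [hZ, Submodule.mem_iInf, SetLike.mem_coe] at this
    exact this n
  have hTB : TotallyBounded S := by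
    apply h
    · exact (Metric.isBounded_closedBall).subset Set.inter_subset_right
    · have : (fun n => ⨆ x : S, ‖χ n (x : E)‖) = fun _ => 0 := by
        funext n
        apply le_antisymm
        · apply Real.iSup_le _ le_rfl
          rintro ⟨x, hx⟩
          simp [hzero x hx n]
        · rcases isEmpty_or_nonempty S with hE | hE
          · simp [Real.iSup_of_isEmpty]
          · exact le_ciSup_of_le (by use 0; rintro r ⟨⟨x, hx⟩, rfl⟩; simp [hzero x hx n])
              hE.some (by simp [hzero _ hE.some.2 n])
      rw [UnifNull, this]
      exact tendsto_const_nhds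
  have hclosed : IsClosed (Z : Set E) := by
    have : (Z : Set E) = ⋂ n, (LinearMap.ker (χ n : E →ₗ[𝕜] 𝕜) : Set E) := by
      simp [hZ, Submodule.coe_iInf]
    rw [this]
    exact isClosed_iInter fun n => ContinuousLinearMap.isClosed_ker (χ n)
  haveI : CompleteSpace Z := hclosed.completeSpace_coe
  have hcomp : IsCompact (Metric.closedBall (0 : Z) 1) := by
    rw [isCompact_iff_totallyBounded_isComplete]
    constructor
    · have : TotallyBounded ((↑) ⁻¹' S : Set Z) :=
        totallyBounded_preimage isometry_subtype_coe.isUniformInducing hTB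
      apply this.subset
      intro z hz
      exact ⟨z.2, by simpa using hz⟩
    · exact Metric.isClosed_closedBall.isComplete
  exact .of_isCompact_closedBall₀ 𝕜 one_pos hcomp
end
end

section
/- If K is an infinite compact Hausdorff space such that C(K) has the Grothendieck property, then the Banach space C(K) is not Gelfand–Phillips. -/
open Filter Topology Bornology

noncomputable section

variable {𝕜 E F : Type*} [RCLike 𝕜] [NormedAddCommGroup E] [NormedSpace 𝕜 E]
  [NormedAddCommGroup F] [NormedSpace 𝕜 F]

namespace GPaux

open Set in
def usign {𝕜 : Type*} [RCLike 𝕜] (z : 𝕜) : 𝕜 :=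
  if z = 0 then 1 else (starRingEnd 𝕜) z / (‖z‖ : 𝕜)

lemma usign_norm_le (z : 𝕜) : ‖usign z‖ ≤ 1 := by
  unfold usign
  split_ifs with h
  · simp
  · rw [norm_div, RCLike.norm_conj, RCLike.norm_ofReal, abs_norm,
      div_self (norm_ne_zero_iff.2 h)]

lemma usign_mul (z : 𝕜) : usign z * z = (‖z‖ : 𝕜) := by
  unfold usign
  split_ifs with h
  · simp [h]
  · rw [div_mul_eq_mul_div, RCLike.conj_mul, sq, mul_div_assoc,
      div_self (by exact_mod_cast norm_ne_zero_iff.2 h), mul_one]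

section Abstract
variable (e : ℕ → E)
  (hl1 : ∀ (μ : E →L[𝕜] 𝕜) (S : Finset ℕ), ∑ k ∈ S, ‖μ (e k)‖ ≤ ‖μ‖)

include hl1 in
lemma summable_l1 (μ : E →L[𝕜] 𝕜) : Summable fun k => ‖μ (e k)‖ :=
  summable_of_sum_range_le (fun _ => norm_nonneg _) fun n => hl1 μ (Finset.range n)

include hl1 in
lemma tsum_l1_le (μ : E →L[𝕜] 𝕜) : ∑' k, ‖μ (e k)‖ ≤ ‖μ‖ :=
  Summable.tsum_le_of_sum_range_le (summable_l1 e hl1 μ) fun n => hl1 μ (Finset.range n)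

include hl1 in
lemma phi_summable {b : ℕ → 𝕜} (hb : ∀ k, ‖b k‖ ≤ 1) (μ : E →L[𝕜] 𝕜) :
    Summable fun k => b k * μ (e k) := by
  refine Summable.of_norm (Summable.of_nonneg_of_le (fun k => norm_nonneg _)
    (fun k => ?_) (summable_l1 e hl1 μ))
  rw [norm_mul]
  exact mul_le_of_le_one_left (norm_nonneg _) (hb k)

include hl1 in
lemma exists_Phi {b : ℕ → 𝕜} (hb : ∀ k, ‖b k‖ ≤ 1) :
    ∃ Φ : (E →L[𝕜] 𝕜) →L[𝕜] 𝕜, ∀ μ, Φ μ = ∑' k, b k * μ (e k) := by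
  refine ⟨LinearMap.mkContinuous
    { toFun := fun μ => ∑' k, b k * μ (e k)
      map_add' := fun μ ν => ?_
      map_smul' := fun c μ => ?_ } 1 (fun μ => ?_), fun μ => rfl⟩
  · simp only [ContinuousLinearMap.add_apply, mul_add]
    exact Summable.tsum_add (phi_summable e hl1 hb μ) (phi_summable e hl1 hb ν)
  · simp only [ContinuousLinearMap.coe_smul', Pi.smul_apply, smul_eq_mul, RingHom.id_apply,
      mul_left_comm _ c]
    exact tsum_mul_left
  · rw [one_mul]
    refine le_trans (norm_tsum_le_tsum_norm (phi_summable e hl1 hb μ).norm)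
      (le_trans (Summable.tsum_le_tsum (fun k => ?_) (phi_summable e hl1 hb μ).norm
        (summable_l1 e hl1 μ)) (tsum_l1_le e hl1 μ))
    rw [norm_mul]
    exact mul_le_of_le_one_left (norm_nonneg _) (hb k)

include hl1 in
set_option maxHeartbeats 1000000 in
lemma limited_range
    (hGr : ∀ μ : ℕ → E →L[𝕜] 𝕜,
      (∀ f : E, Tendsto (fun n => μ n f) atTop (𝓝 0)) →
      ∀ Φ : (E →L[𝕜] 𝕜) →L[𝕜] 𝕜, Tendsto (fun n => Φ (μ n)) atTop (𝓝 0))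
    (hF1 : ∀ k, ‖e k‖ ≤ 1) :
    Limited 𝕜 (Set.range e) := by
  classical
  intro χ hχ
  unfold UnifNull
  haveI hne : Nonempty ↥(Set.range e) := ⟨⟨e 0, 0, rfl⟩⟩
  have hbdd : ∀ n, BddAbove (Set.range fun x : Set.range e => ‖χ n (x : E)‖) := by
    intro n
    refine ⟨‖χ n‖, ?_⟩
    rintro r ⟨⟨x, k, rfl⟩, rfl⟩
    calc ‖χ n (e k)‖ ≤ ‖χ n‖ * ‖e k‖ := (χ n).le_opNorm _
      _ ≤ ‖χ n‖ := mul_le_of_le_one_right (norm_nonneg _) (hF1 k)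
  have hs0 : ∀ n, (0:ℝ) ≤ ⨆ x : Set.range e, ‖χ n (x : E)‖ := fun n =>
    le_trans (norm_nonneg (χ n (e 0))) (le_ciSup (hbdd n) ⟨e 0, 0, rfl⟩)
  by_contra hcon
  rw [Metric.tendsto_atTop] at hcon
  push_neg at hcon
  obtain ⟨ε, hε, hfreq⟩ := hcon
  set δ := ε/2 with hδdef
  have hδ : 0 < δ := by positivity
  have hfreq' : ∀ N, ∃ n, N ≤ n ∧ ∃ k, δ < ‖χ n (e k)‖ := by
    intro N
    obtain ⟨n, hnN, hn⟩ := hfreq N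
    refine ⟨n, hnN, ?_⟩
    rw [Real.dist_eq, sub_zero, abs_of_nonneg (hs0 n)] at hn
    have hsn : δ < ⨆ x : Set.range e, ‖χ n (x : E)‖ := by
      have : δ < ε := by rw [hδdef]; linarith
      linarith
    obtain ⟨⟨x, k, rfl⟩, hx⟩ := exists_lt_of_lt_ciSup hsn
    exact ⟨k, hx⟩
  have hcoord : ∀ k, Tendsto (fun n => ‖χ n (e k)‖) atTop (𝓝 0) := by
    intro k; simpa using (hχ (e k)).norm
  -- gliding hump step
  have hstep : ∀ Np np : ℕ, ∃ n N', np < n ∧ Np < N' ∧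
      (∑ k ∈ Finset.range Np, ‖χ n (e k)‖) < δ/8 ∧
      (∃ k, Np ≤ k ∧ k < N' ∧ δ < ‖χ n (e k)‖) ∧
      (∑' m, ‖χ n (e (m + N'))‖) < δ/8 := by
    intro Np np
    have hhead : Tendsto (fun n => ∑ k ∈ Finset.range Np, ‖χ n (e k)‖) atTop (𝓝 0) := by
      have := tendsto_finset_sum (Finset.range Np)
        (fun k (_ : k ∈ Finset.range Np) => hcoord k)
      simpa using this
    obtain ⟨M, hM⟩ := Filter.eventually_atTop.1
      (hhead.eventually_lt_const (by positivity : (0:ℝ) < δ/8))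
    obtain ⟨n, hnge, k, hk⟩ := hfreq' (max M (np+1))
    have hhead' : ∑ j ∈ Finset.range Np, ‖χ n (e j)‖ < δ/8 :=
      hM n (le_trans (le_max_left _ _) hnge)
    have hkNp : Np ≤ k := by
      by_contra hlt
      push_neg at hlt
      have : ‖χ n (e k)‖ ≤ ∑ j ∈ Finset.range Np, ‖χ n (e j)‖ :=
        Finset.single_le_sum (f := fun j => ‖χ n (e j)‖) (fun i _ => norm_nonneg _)
          (Finset.mem_range.2 hlt)
      linarith
    have htail : Tendsto (fun N => ∑' m, ‖χ n (e (m + N))‖) atTop (𝓝 0) :=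
      tendsto_sum_nat_add fun j => ‖χ n (e j)‖
    obtain ⟨N0, hN0⟩ := Filter.eventually_atTop.1
      (htail.eventually_lt_const (by positivity : (0:ℝ) < δ/8))
    refine ⟨n, max N0 (max (Np+1) (k+1)), ?_, ?_, hhead', ⟨k, hkNp, ?_, hk⟩,
      hN0 _ (le_max_left _ _)⟩
    · have : np + 1 ≤ max M (np+1) := le_max_right _ _
      omega
    · have : Np + 1 ≤ max (Np+1) (k+1) := le_max_left _ _
      have h2 : max (Np+1) (k+1) ≤ max N0 (max (Np+1) (k+1)) := le_max_right _ _
      omega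
    · have : k + 1 ≤ max (Np+1) (k+1) := le_max_right _ _
      have h2 : max (Np+1) (k+1) ≤ max N0 (max (Np+1) (k+1)) := le_max_right _ _
      omega
  -- iterate the step
  set stp : ℕ × ℕ → ℕ × ℕ := fun p =>
    ⟨(hstep p.2 p.1).choose, (hstep p.2 p.1).choose_spec.choose⟩ with hstpdef
  set T : ℕ → ℕ × ℕ := fun i => stp^[i] (0, 0) with hTdef
  have hTsucc : ∀ i, T (i+1) = stp (T i) := fun i => Function.iterate_succ_apply' stp i (0,0)
  set nn : ℕ → ℕ := fun i => (T i).1 with hnndef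
  set NN : ℕ → ℕ := fun i => (T i).2 with hNNdef
  have hprop : ∀ i, nn i < nn (i+1) ∧ NN i < NN (i+1) ∧
      (∑ k ∈ Finset.range (NN i), ‖χ (nn (i+1)) (e k)‖) < δ/8 ∧
      (∃ k, NN i ≤ k ∧ k < NN (i+1) ∧ δ < ‖χ (nn (i+1)) (e k)‖) ∧
      (∑' m, ‖χ (nn (i+1)) (e (m + NN (i+1)))‖) < δ/8 := by
    intro i
    have e1 : nn (i+1) = (hstep (NN i) (nn i)).choose := by
      rw [hnndef]
      show (T (i+1)).1 = _
      rw [hTsucc i]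
    have e2 : NN (i+1) = (hstep (NN i) (nn i)).choose_spec.choose := by
      rw [hNNdef]
      show (T (i+1)).2 = _
      rw [hTsucc i]
    rw [e1, e2]
    exact (hstep (NN i) (nn i)).choose_spec.choose_spec
  have hNN0 : NN 0 = 0 := rfl
  have hNNmono : StrictMono NN := strictMono_nat_of_lt_succ fun i => (hprop i).2.1
  have hnnmono : StrictMono nn := strictMono_nat_of_lt_succ fun i => (hprop i).1
  -- block structure
  have hex : ∀ k, ∃ i, k < NN (i+1) := fun k =>
    ⟨k, lt_of_lt_of_le (Nat.lt_succ_self k) hNNmono.le_apply⟩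
  set blockOf : ℕ → ℕ := fun k => Nat.find (hex k) with hblockdef
  have hbo1 : ∀ k, k < NN (blockOf k + 1) := fun k => Nat.find_spec (hex k)
  have hbo2 : ∀ k, NN (blockOf k) ≤ k := by
    intro k
    rcases Nat.eq_zero_or_pos (blockOf k) with h0 | hpos
    · rw [h0, hNN0]; exact Nat.zero_le k
    · obtain ⟨i, hi⟩ := Nat.exists_eq_succ_of_ne_zero (Nat.pos_iff_ne_zero.1 hpos)
      have hmin := Nat.find_min (hex k) (show i < blockOf k by omega)
      rw [hi]
      exact not_lt.1 hmin
  have hbo3 : ∀ i k, NN i ≤ k → k < NN (i+1) → blockOf k = i := by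
    intro i k h1 h2
    have ha := hbo1 k
    have hb := hbo2 k
    by_contra hne
    rcases lt_or_gt_of_ne hne with hlt | hgt
    · have : NN (blockOf k + 1) ≤ NN i := hNNmono.monotone (by omega)
      omega
    · have : NN (i + 1) ≤ NN (blockOf k) := hNNmono.monotone (by omega)
      omega
  -- the functional
  set b : ℕ → 𝕜 := fun k => usign (χ (nn (blockOf k + 1)) (e k)) with hbdef
  have hb : ∀ k, ‖b k‖ ≤ 1 := fun k => usign_norm_le _
  obtain ⟨Φ, hΦ⟩ := exists_Phi e hl1 hb
  have hΦ0 : Tendsto (fun n => Φ (χ n)) atTop (𝓝 0) := hGr χ hχ Φ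
  have hmono1 : StrictMono fun i => nn (i+1) := fun a c h => hnnmono (by omega)
  have hΦ1 : Tendsto (fun i => ‖Φ (χ (nn (i+1)))‖) atTop (𝓝 0) := by
    simpa using (hΦ0.comp hmono1.tendsto_atTop).norm
  -- lower bound
  have hlb : ∀ i, 3*δ/4 ≤ ‖Φ (χ (nn (i+1)))‖ := by
    intro i
    obtain ⟨hlt_n, hltN, hhead, ⟨k0, hk0a, hk0b, hk0c⟩, htail⟩ := hprop i
    set μ := χ (nn (i+1)) with hμdef
    set a : ℕ → 𝕜 := fun k => b k * μ (e k) with hadef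
    have hsa : Summable a := phi_summable e hl1 hb μ
    have hnorms : Summable fun k => ‖μ (e k)‖ := summable_l1 e hl1 μ
    have hanorm : ∀ k, ‖a k‖ ≤ ‖μ (e k)‖ := by
      intro k
      rw [hadef]
      show ‖b k * μ (e k)‖ ≤ _
      rw [norm_mul]
      exact mul_le_of_le_one_left (norm_nonneg _) (hb k)
    have hsplit1 : ∑' k, a k = (∑ k ∈ Finset.range (NN (i+1)), a k) + ∑' m, a (m + NN (i+1)) :=
      (Summable.sum_add_tsum_nat_add (NN (i+1)) hsa).symm
    have hsplit2 : ∑ k ∈ Finset.range (NN (i+1)), a k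
        = (∑ k ∈ Finset.range (NN i), a k) + ∑ k ∈ Finset.Ico (NN i) (NN (i+1)), a k := by
      rw [Finset.range_eq_Ico, Finset.range_eq_Ico]
      exact (Finset.sum_Ico_consecutive _ (Nat.zero_le _) (le_of_lt hltN)).symm
    have hblock : ∑ k ∈ Finset.Ico (NN i) (NN (i+1)), a k
        = ((∑ k ∈ Finset.Ico (NN i) (NN (i+1)), ‖μ (e k)‖ : ℝ) : 𝕜) := by
      rw [RCLike.ofReal_sum]
      refine Finset.sum_congr rfl fun k hk => ?_
      rw [Finset.mem_Ico] at hk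
      have hbok : blockOf k = i := hbo3 i k hk.1 hk.2
      rw [hadef]
      show b k * μ (e k) = _
      rw [hbdef]
      show usign (χ (nn (blockOf k + 1)) (e k)) * μ (e k) = _
      rw [hbok, ← hμdef]
      exact usign_mul _
    have hBnorm : δ ≤ ‖∑ k ∈ Finset.Ico (NN i) (NN (i+1)), a k‖ := by
      rw [hblock, RCLike.norm_ofReal,
        abs_of_nonneg (Finset.sum_nonneg fun _ _ => norm_nonneg _)]
      refine le_trans (le_of_lt hk0c) (Finset.single_le_sum (f := fun j => ‖μ (e j)‖)
        (fun j _ => norm_nonneg _) ?_)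
      exact Finset.mem_Ico.2 ⟨hk0a, hk0b⟩
    have hHnorm : ‖∑ k ∈ Finset.range (NN i), a k‖ < δ/8 :=
      lt_of_le_of_lt (le_trans (norm_sum_le _ _)
        (Finset.sum_le_sum fun k _ => hanorm k)) hhead
    have htsub : Summable fun m => ‖a (m + NN (i+1))‖ :=
      Summable.of_nonneg_of_le (fun _ => norm_nonneg _) (fun m => hanorm _)
        ((summable_nat_add_iff _).2 hnorms)
    have hTnorm : ‖∑' m, a (m + NN (i+1))‖ < δ/8 :=
      lt_of_le_of_lt (le_trans (norm_tsum_le_tsum_norm htsub)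
        (Summable.tsum_le_tsum (fun m => hanorm _) htsub ((summable_nat_add_iff _).2 hnorms))) htail
    have hBeq : (∑ k ∈ Finset.Ico (NN i) (NN (i+1)), a k)
        = (∑' k, a k) - (∑ k ∈ Finset.range (NN i), a k) - (∑' m, a (m + NN (i+1))) := by
      rw [hsplit1, hsplit2]; ring
    have hBle : ‖∑ k ∈ Finset.Ico (NN i) (NN (i+1)), a k‖
        ≤ ‖∑' k, a k‖ + ‖∑ k ∈ Finset.range (NN i), a k‖ + ‖∑' m, a (m + NN (i+1))‖ := by
      rw [hBeq]
      calc ‖(∑' k, a k) - (∑ k ∈ Finset.range (NN i), a k) - ∑' m, a (m + NN (i+1))‖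
          ≤ ‖(∑' k, a k) - ∑ k ∈ Finset.range (NN i), a k‖ + ‖∑' m, a (m + NN (i+1))‖ :=
            norm_sub_le _ _
        _ ≤ ‖∑' k, a k‖ + ‖∑ k ∈ Finset.range (NN i), a k‖ + ‖∑' m, a (m + NN (i+1))‖ := by
            have := norm_sub_le (∑' k, a k) (∑ k ∈ Finset.range (NN i), a k)
            linarith
    have hΦval : Φ μ = ∑' k, a k := hΦ μ
    rw [hΦval]
    linarith
  have := (hΦ1.eventually_lt_const (show (0:ℝ) < 3*δ/4 by positivity)).exists
  obtain ⟨i, hi⟩ := this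
  linarith [hlb i]

omit hl1 in
lemma not_totallyBounded (hsep : ∀ k j, k ≠ j → 1 ≤ ‖e k - e j‖) :
    ¬ TotallyBounded (Set.range e) := by
  intro h
  obtain ⟨t, htfin, hsub⟩ := Metric.totallyBounded_iff.1 h (1/2) (by norm_num)
  have hy : ∀ k : ℕ, ∃ y ∈ t, e k ∈ Metric.ball y (1/2) := by
    intro k
    have := hsub ⟨k, rfl⟩
    simpa using this
  choose y hyt hym using hy
  haveI : Finite t := htfin
  obtain ⟨k, j, hkj, heq⟩ :=
    Finite.exists_ne_map_eq_of_infinite (fun k => (⟨y k, hyt k⟩ : t))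
  have h1 : dist (e k) (e j) < 1 := by
    have h2 : dist (e k) (y k) < 1/2 := Metric.mem_ball.1 (hym k)
    have h3 : dist (e j) (y j) < 1/2 := Metric.mem_ball.1 (hym j)
    have hyy : y k = y j := congrArg Subtype.val heq
    calc dist (e k) (e j) ≤ dist (e k) (y k) + dist (y j) (e j) := by
          rw [hyy]; exact dist_triangle _ _ _
      _ < 1 := by rw [dist_comm (y j)]; linarith
  have := hsep k j hkj
  rw [← dist_eq_norm] at this
  linarith

end Abstract

section CK

open Set

variable (K : Type*) [TopologicalSpace K] [CompactSpace K] [T2Space K] [Infinite K]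

lemma exists_disjoint_opens :
    ∃ U : ℕ → Set K, (∀ i, IsOpen (U i)) ∧ (∀ i, (U i).Nonempty) ∧
      (∀ i j, i ≠ j → Disjoint (U i) (U j)) := by
  classical
  obtain ⟨x, hx⟩ := exists_nhds_ne_neBot K
  have hstep : ∀ V : Set K, IsOpen V → x ∈ V →
      ∃ U W : Set K, IsOpen U ∧ U.Nonempty ∧ IsOpen W ∧ x ∈ W ∧ Disjoint U W ∧
        U ⊆ V ∧ W ⊆ V := by
    intro V hVo hxV
    have hVmem : V \ {x} ∈ 𝓝[≠] x := by
      rw [diff_eq]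
      exact Filter.inter_mem (mem_nhdsWithin_of_mem_nhds (hVo.mem_nhds hxV))
        self_mem_nhdsWithin
    obtain ⟨y, hyV, hyx⟩ := Filter.nonempty_of_mem hVmem
    rw [mem_singleton_iff] at hyx
    obtain ⟨A, B, hAo, hBo, hyA, hxB, hAB⟩ := t2_separation hyx
    exact ⟨A ∩ V, B ∩ V, hAo.inter hVo, ⟨y, hyA, hyV⟩, hBo.inter hVo, ⟨hxB, hxV⟩,
      hAB.mono inter_subset_left inter_subset_left, inter_subset_right, inter_subset_right⟩
  set stp : Set K × Set K → Set K × Set K := fun p =>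
    if h : IsOpen p.2 ∧ x ∈ p.2 then
      ⟨(hstep p.2 h.1 h.2).choose, (hstep p.2 h.1 h.2).choose_spec.choose⟩
    else p with hstpdef
  set Q : ℕ → Set K × Set K := fun i => stp^[i] (∅, Set.univ) with hQdef
  have hQsucc : ∀ i, Q (i+1) = stp (Q i) := fun i => Function.iterate_succ_apply' stp i _
  have hV : ∀ i, IsOpen (Q i).2 ∧ x ∈ (Q i).2 := by
    intro i
    induction i with
    | zero => exact ⟨isOpen_univ, trivial⟩
    | succ i ih =>
      rw [hQsucc i, hstpdef]
      simp only [dif_pos ih]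
      have spec := (hstep (Q i).2 ih.1 ih.2).choose_spec.choose_spec
      exact ⟨spec.2.2.1, spec.2.2.2.1⟩
  have hprops : ∀ i, IsOpen (Q (i+1)).1 ∧ (Q (i+1)).1.Nonempty ∧
      Disjoint (Q (i+1)).1 (Q (i+1)).2 ∧ (Q (i+1)).1 ⊆ (Q i).2 ∧ (Q (i+1)).2 ⊆ (Q i).2 := by
    intro i
    have ih := hV i
    have spec := (hstep (Q i).2 ih.1 ih.2).choose_spec.choose_spec
    have he : Q (i+1) = ⟨(hstep (Q i).2 ih.1 ih.2).choose,
        (hstep (Q i).2 ih.1 ih.2).choose_spec.choose⟩ := by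
      rw [hQsucc i, hstpdef]
      simp only [dif_pos ih]
    rw [he]
    exact ⟨spec.1, spec.2.1, spec.2.2.2.2.1, spec.2.2.2.2.2.1, spec.2.2.2.2.2.2⟩
  have hVmono : ∀ i j, i ≤ j → (Q j).2 ⊆ (Q i).2 := by
    intro i j hij
    induction j with
    | zero => rw [Nat.le_zero.1 hij]
    | succ j ihj =>
      rcases Nat.lt_or_ge i (j+1) with h | h
      · exact subset_trans (hprops j).2.2.2.2 (ihj (by omega))
      · rw [le_antisymm hij h]
  refine ⟨fun i => (Q (i+1)).1, fun i => (hprops i).1, fun i => (hprops i).2.1, ?_⟩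
  have key : ∀ i j, i < j → Disjoint (Q (i+1)).1 (Q (j+1)).1 := by
    intro i j hij
    refine Disjoint.mono_right ?_ (hprops i).2.2.1
    exact subset_trans (hprops j).2.2.2.1 (hVmono (i+1) j hij)
  intro i j hij
  rcases lt_or_gt_of_ne hij with h | h
  · exact key i j h
  · exact (key j i h).symm

variable {𝕜 : Type*} [RCLike 𝕜]

lemma exists_bumps : ∃ e : ℕ → C(K, 𝕜),
    (∀ k, ‖e k‖ ≤ 1) ∧ (∀ k j, k ≠ j → 1 ≤ ‖e k - e j‖) ∧
    (∀ (μ : C(K, 𝕜) →L[𝕜] 𝕜) (S : Finset ℕ), ∑ k ∈ S, ‖μ (e k)‖ ≤ ‖μ‖) := by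
  classical
  obtain ⟨U, hUo, hUne, hUdisj⟩ := exists_disjoint_opens K
  choose xk hxk using hUne
  have hury : ∀ k, ∃ f : C(K, ℝ), EqOn f 0 (U k)ᶜ ∧ EqOn f 1 {xk k} ∧
      ∀ z, f z ∈ Icc (0:ℝ) 1 := fun k =>
    exists_continuous_zero_one_of_isClosed (hUo k).isClosed_compl isClosed_singleton
      (Set.disjoint_singleton_right.2 (not_not_intro (hxk k)))
  choose f h0 h1 h01 using hury
  set e : ℕ → C(K, 𝕜) := fun k =>
    ContinuousMap.mk (fun z => ((f k z : ℝ) : 𝕜))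
      (RCLike.continuous_ofReal.comp (f k).continuous) with hedef
  have heval : ∀ k z, e k z = ((f k z : ℝ) : 𝕜) := fun k z => rfl
  have hnorm1 : ∀ k z, ‖e k z‖ ≤ 1 := by
    intro k z
    rw [heval, RCLike.norm_ofReal, abs_le]
    have := h01 k z
    exact ⟨by linarith [this.1], this.2⟩
  have hsupp : ∀ k z, e k z ≠ 0 → z ∈ U k := by
    intro k z hz
    by_contra hzU
    apply hz
    rw [heval, h0 k hzU]
    simp
  have hF1 : ∀ k, ‖e k‖ ≤ 1 := fun k =>
    (ContinuousMap.norm_le _ zero_le_one).2 (hnorm1 k)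
  refine ⟨e, hF1, ?_, ?_⟩
  · intro k j hkj
    have h1k : e k (xk k) = 1 := by
      rw [heval, h1 k rfl]
      simp
    have h0j : e j (xk k) = 0 := by
      by_contra hne
      exact Set.disjoint_left.1 (hUdisj k j hkj) (hxk k) (hsupp j (xk k) hne)
    calc (1:ℝ) = ‖(e k - e j) (xk k)‖ := by
          rw [ContinuousMap.sub_apply, h1k, h0j, sub_zero, norm_one]
      _ ≤ ‖e k - e j‖ := ContinuousMap.norm_coe_le_norm _ _
  · intro μ S
    set g : C(K, 𝕜) := ∑ k ∈ S, usign (μ (e k)) • e k with hgdef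
    have hg1 : ‖g‖ ≤ 1 := by
      refine (ContinuousMap.norm_le _ zero_le_one).2 fun z => ?_
      have hgz : g z = ∑ k ∈ S, usign (μ (e k)) * e k z := by
        rw [hgdef]
        simp [ContinuousMap.coe_sum, Finset.sum_apply, smul_eq_mul]
      by_cases hz : ∃ k0 ∈ S, e k0 z ≠ 0
      · obtain ⟨k0, hk0S, hk0⟩ := hz
        have hz0 : ∀ j ∈ S, j ≠ k0 → usign (μ (e j)) * e j z = 0 := by
          intro j hjS hj
          have hej : e j z = 0 := by
            by_contra hne
            exact Set.disjoint_left.1 (hUdisj j k0 hj) (hsupp j z hne) (hsupp k0 z hk0)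
          rw [hej, mul_zero]
        rw [hgz, Finset.sum_eq_single_of_mem k0 hk0S hz0, norm_mul]
        calc ‖usign (μ (e k0))‖ * ‖e k0 z‖ ≤ 1 * 1 :=
              mul_le_mul (usign_norm_le _) (hnorm1 k0 z) (norm_nonneg _) zero_le_one
          _ = 1 := mul_one 1
      · push_neg at hz
        rw [hgz, Finset.sum_eq_zero (fun j hj => by rw [hz j hj, mul_zero])]
        simp
    have hμg : μ g = ((∑ k ∈ S, ‖μ (e k)‖ : ℝ) : 𝕜) := by
      rw [hgdef, map_sum, RCLike.ofReal_sum]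
      refine Finset.sum_congr rfl fun k _ => ?_
      rw [map_smul, smul_eq_mul]
      exact usign_mul _
    calc ∑ k ∈ S, ‖μ (e k)‖ = ‖μ g‖ := by
          rw [hμg, RCLike.norm_ofReal,
            abs_of_nonneg (Finset.sum_nonneg fun _ _ => norm_nonneg _)]
      _ ≤ ‖μ‖ * ‖g‖ := μ.le_opNorm g
      _ ≤ ‖μ‖ := mul_le_of_le_one_right (norm_nonneg μ) hg1

end CK
end GPaux

theorem stmt17 {𝕜 : Type*} [RCLike 𝕜] (K : Type*) [TopologicalSpace K]
    [CompactSpace K] [T2Space K] [Infinite K]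
    (hGr : ∀ μ : ℕ → C(K, 𝕜) →L[𝕜] 𝕜,
      (∀ f : C(K, 𝕜), Tendsto (fun n => μ n f) atTop (𝓝 0)) →
      ∀ Φ : (C(K, 𝕜) →L[𝕜] 𝕜) →L[𝕜] 𝕜, Tendsto (fun n => Φ (μ n)) atTop (𝓝 0)) :
    ¬ GelfandPhillips 𝕜 C(K, 𝕜) := by
  intro hGP
  obtain ⟨e, hF1, hsep, hl1⟩ := GPaux.exists_bumps K (𝕜 := 𝕜)
  have hlim : Limited 𝕜 (Set.range e) := GPaux.limited_range e hl1 hGr hF1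
  have hbd : IsBounded (Set.range e) := isBounded_iff_forall_norm_le.2
    ⟨1, by rintro x ⟨k, rfl⟩; exact hF1 k⟩
  exact GPaux.not_totallyBounded e hsep (hGP _ hbd hlim)
end
end

section
/- Let E be a Banach space such that the closed unit ball of E' is sequentially compact in the weak* topology. Then E is Gelfand–Phillips. -/
open Filter Topology Bornology

noncomputable section

variable {𝕜 E F : Type*} [RCLike 𝕜] [NormedAddCommGroup E] [NormedSpace 𝕜 E]
  [NormedAddCommGroup F] [NormedSpace 𝕜 F]

private lemma exists_seq_aux' {α : Type*} {B : Set α} {P : α → α → Prop}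
    (H : ∀ s : Finset α, ∃ y ∈ B, ∀ z ∈ s, P y z) :
    ∃ x : ℕ → α, (∀ n, x n ∈ B) ∧ ∀ m n : ℕ, m < n → P (x n) (x m) := by
  classical
  choose g hgB hgP using H
  let F : ℕ → Finset α := fun n => Nat.rec ∅ (fun _ s => insert (g s) s) n
  have hF : ∀ n, F (n+1) = insert (g (F n)) (F n) := fun n => rfl
  refine ⟨fun n => g (F n), fun n => hgB _, ?_⟩
  have hmem : ∀ m n, m < n → g (F m) ∈ F n := by
    intro m n h
    induction n with
    | zero => omega
    | succ k ih =>
      rw [hF]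
      rcases Nat.lt_succ_iff_lt_or_eq.mp h with h' | h'
      · exact Finset.mem_insert_of_mem (ih h')
      · subst h'; exact Finset.mem_insert_self _ _
  intro m n h
  exact hgP (F n) _ (hmem m n h)

theorem stmt18 [CompleteSpace E]
    (hsc : ∀ χ : ℕ → E →L[𝕜] 𝕜, (∀ n, ‖χ n‖ ≤ 1) →
      ∃ (f : E →L[𝕜] 𝕜) (φ : ℕ → ℕ), StrictMono φ ∧
        ∀ x : E, Tendsto (fun k => χ (φ k) x) atTop (𝓝 (f x))) :
    GelfandPhillips 𝕜 E := by
  classical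
  intro B hB hlim
  by_contra hTB
  rw [Metric.totallyBounded_iff] at hTB
  push_neg at hTB
  obtain ⟨ε, hε, hsep⟩ := hTB
  -- a bound on B
  obtain ⟨R, hR⟩ := hB.exists_norm_le
  -- separated sequence in B
  obtain ⟨x, hxB, hxsep⟩ :
      ∃ x : ℕ → E, (∀ n, x n ∈ B) ∧ ∀ m n : ℕ, m < n → ε ≤ dist (x n) (x m) := by
    apply exists_seq_aux' (P := fun y z => ε ≤ dist y z)
    intro s
    obtain ⟨y, hyB, hy⟩ := Set.not_subset.mp (hsep ↑s s.finite_toSet)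
    refine ⟨y, hyB, fun z hz => ?_⟩
    by_contra h
    push_neg at h
    exact hy (Set.mem_biUnion hz (Metric.mem_ball.mpr h))
  set δ : ℝ := ε / 4 with hδ
  have hδpos : 0 < δ := by positivity
  -- key claim: finitely many functionals δ-approximate the unit ball on the sequence x
  have key : ∃ G : Finset (E →L[𝕜] 𝕜), ∀ f : E →L[𝕜] 𝕜, ‖f‖ ≤ 1 →
      ∃ g ∈ G, ∀ n, ‖f (x n) - g (x n)‖ ≤ δ := by
    by_contra hG
    push_neg at hG
    obtain ⟨ff, hffnorm, hffsep⟩ :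
        ∃ ff : ℕ → E →L[𝕜] 𝕜, (∀ n, ff n ∈ {f : E →L[𝕜] 𝕜 | ‖f‖ ≤ 1}) ∧
          ∀ m n : ℕ, m < n → ∃ j, δ < ‖ff n (x j) - ff m (x j)‖ := by
      refine exists_seq_aux' (B := {f : E →L[𝕜] 𝕜 | ‖f‖ ≤ 1})
        (P := fun f g => ∃ j, δ < ‖f (x j) - g (x j)‖) (fun s => ?_)
      obtain ⟨f, hf1, hf2⟩ := hG s
      exact ⟨f, hf1, fun g hg => hf2 g hg⟩
    obtain ⟨flim, φ, hφ, hconv⟩ := hsc ff hffnorm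
    set χ : ℕ → E →L[𝕜] 𝕜 := fun k => ff (φ k) - flim with hχ
    have hws : WeakStarNull χ := by
      intro y
      have := (hconv y).sub_const (flim y)
      simpa [χ, sub_self] using this
    have hun : UnifNull χ B := hlim χ hws
    -- bound each term by the sup
    have hbdd : ∀ k, BddAbove (Set.range fun p : B => ‖χ k (p : E)‖) := by
      intro k
      refine ⟨‖χ k‖ * R, ?_⟩
      rintro r ⟨p, rfl⟩
      exact le_trans ((χ k).le_opNorm _) (by
        have := hR p p.2
        nlinarith [norm_nonneg (χ k)])
    have hev : ∀ᶠ k in atTop, (⨆ p : B, ‖χ k (p : E)‖) < δ / 2 :=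
      hun.eventually_lt_const (half_pos hδpos)
    obtain ⟨K, hK⟩ := hev.exists_forall_of_atTop
    obtain ⟨j, hj⟩ := hffsep (φ K) (φ (K + 1)) (hφ (Nat.lt_succ_self K))
    have h1 : ‖χ (K + 1) (x j)‖ ≤ ⨆ p : B, ‖χ (K + 1) (p : E)‖ :=
      le_ciSup (hbdd (K + 1)) (⟨x j, hxB j⟩ : B)
    have h2 : ‖χ K (x j)‖ ≤ ⨆ p : B, ‖χ K (p : E)‖ :=
      le_ciSup (hbdd K) (⟨x j, hxB j⟩ : B)
    have h3 : ‖ff (φ (K + 1)) (x j) - ff (φ K) (x j)‖ ≤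
        ‖χ (K + 1) (x j)‖ + ‖χ K (x j)‖ := by
      have : ff (φ (K + 1)) (x j) - ff (φ K) (x j) =
          χ (K + 1) (x j) - χ K (x j) := by
        simp only [χ, ContinuousLinearMap.sub_apply]; ring
      rw [this]
      exact norm_sub_le _ _
    have := hK (K + 1) (Nat.le_succ K)
    have := hK K le_rfl
    linarith
  obtain ⟨G, hGapp⟩ := key
  -- bound on the norms of elements of G
  obtain ⟨C, hC⟩ := (G.image fun g => ‖g‖).exists_le
  have hC' : ∀ g ∈ G, ‖g‖ ≤ max C 0 := fun g hg =>
    le_max_of_le_left (hC _ (Finset.mem_image_of_mem _ hg))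
  have hR0 : 0 ≤ R := (norm_nonneg _).trans (hR _ (hxB 0))
  -- the vector sequence of values of G on x
  set v : ℕ → (↥G → 𝕜) := fun n g => (g : E →L[𝕜] 𝕜) (x n) with hv
  have hvmem : ∀ n, v n ∈ Metric.closedBall (0 : ↥G → 𝕜) (max C 0 * R) := by
    intro n
    rw [mem_closedBall_zero_iff]
    refine pi_norm_le_iff_of_nonneg (by positivity) |>.mpr fun g => ?_
    calc ‖(g : E →L[𝕜] 𝕜) (x n)‖ ≤ ‖(g : E →L[𝕜] 𝕜)‖ * ‖x n‖ :=
          (g : E →L[𝕜] 𝕜).le_opNorm _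
      _ ≤ max C 0 * R :=
          mul_le_mul (hC' _ g.2) (hR _ (hxB n)) (norm_nonneg _) (le_max_right _ _)
  obtain ⟨a, -, ψ, hψ, hconv2⟩ :=
    tendsto_subseq_of_bounded Metric.isBounded_closedBall hvmem
  have hcs : CauchySeq (v ∘ ψ) := hconv2.cauchySeq
  obtain ⟨N, hN⟩ := Metric.cauchySeq_iff.mp hcs δ hδpos
  set n₁ : ℕ := ψ N
  set n₂ : ℕ := ψ (N + 1)
  have hlt : n₁ < n₂ := hψ (Nat.lt_succ_self N)
  have hdist : ∀ g ∈ G, ‖(g : E →L[𝕜] 𝕜) (x n₁) - g (x n₂)‖ ≤ δ := by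
    intro g hg
    have h1 : dist (v n₁) (v n₂) < δ := by
      simpa [Function.comp] using hN N le_rfl (N + 1) (Nat.le_succ N)
    have h2 : dist (v n₁ ⟨g, hg⟩) (v n₂ ⟨g, hg⟩) ≤ dist (v n₁) (v n₂) :=
      dist_le_pi_dist (v n₁) (v n₂) ⟨g, hg⟩
    have : dist ((g : E →L[𝕜] 𝕜) (x n₁)) (g (x n₂)) ≤ δ := le_of_lt (lt_of_le_of_lt h2 h1)
    simpa [dist_eq_norm] using this
  -- conclude ‖x n₁ - x n₂‖ ≤ 3δ using duality
  have hnorm : ‖x n₁ - x n₂‖ ≤ 3 * δ := by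
    refine NormedSpace.norm_le_dual_bound 𝕜 _ (by positivity) fun f => ?_
    rcases eq_or_ne f 0 with rfl | hf0
    · simp
    · have hfpos : (0:ℝ) < ‖f‖ := norm_pos_iff.mpr hf0
      set c : 𝕜 := ((‖f‖⁻¹ : ℝ) : 𝕜) with hc
      set f' : E →L[𝕜] 𝕜 := c • f with hf'
      have hcn : ‖c‖ = ‖f‖⁻¹ := by
        rw [hc, RCLike.norm_ofReal, abs_of_nonneg (inv_nonneg.mpr hfpos.le)]
      have hf'1 : ‖f'‖ ≤ 1 := by
        have hns : ‖f'‖ = ‖c‖ * ‖f‖ := norm_smul c f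
        rw [hns, hcn, inv_mul_cancel₀ hfpos.ne']
      obtain ⟨g, hgG, hg⟩ := hGapp f' hf'1
      have hb : ‖f' (x n₁ - x n₂)‖ ≤ 3 * δ := by
        have e1 : f' (x n₁ - x n₂) =
            (f' (x n₁) - g (x n₁)) + (g (x n₁) - g (x n₂)) + (g (x n₂) - f' (x n₂)) := by
          rw [map_sub]; ring
        rw [e1]
        have t1 := hg n₁
        have t2 := hdist g hgG
        have t3 : ‖g (x n₂) - f' (x n₂)‖ ≤ δ := by
          rw [norm_sub_rev]; exact hg n₂
        calc _ ≤ ‖f' (x n₁) - g (x n₁) + (g (x n₁) - g (x n₂))‖ + ‖g (x n₂) - f' (x n₂)‖ :=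
              norm_add_le _ _
          _ ≤ ‖f' (x n₁) - g (x n₁)‖ + ‖g (x n₁) - g (x n₂)‖ + ‖g (x n₂) - f' (x n₂)‖ := by
              linarith [norm_add_le (f' (x n₁) - g (x n₁)) (g (x n₁) - g (x n₂))]
          _ ≤ 3 * δ := by linarith
      have e2 : ‖f (x n₁ - x n₂)‖ = ‖f‖ * ‖f' (x n₁ - x n₂)‖ := by
        rw [hf', ContinuousLinearMap.smul_apply]
        rw [norm_smul, hcn]
        field_simp
      rw [e2, mul_comm (3 * δ) ‖f‖]
      exact mul_le_mul_of_nonneg_left hb hfpos.le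
  have hsep2 : ε ≤ ‖x n₁ - x n₂‖ := by
    have := hxsep n₁ n₂ hlt
    rwa [dist_eq_norm, norm_sub_rev] at this
  rw [hδ] at hnorm
  linarith
end
end
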